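/- arXiv:2003.11112 — 6 statements merged into one kernel-verified Lean document; each statement's English description precedes it below -/
import Mathlib

section
/- Let 0 ≤ k ≤ n−1 and let λ ∈ ℝⁿ with S_k(λ) ≠ 0. Then ∑_{i=1}^n λ_i² (∂Q_k/∂λ_i)(λ) = (k+1)Q_k(λ)² − (k+2)·S_{k+2}(λ)/S_k(λ); equivalently, at points where also S_{k+1}(λ) ≠ 0, this equals (k+1)Q_k(λ)² − (k+2)Q_{k+1}(λ)Q_k(λ). -/
open Finset

/-- `eS k f` is the elementary symmetric polynomial `S_k` of degree `k` in the entries of the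
tuple `f : ι → ℝ` (so `eS 0 f = 1` and `eS k f = 0` for `k > card ι`). -/
noncomputable def eS {ι : Type*} [DecidableEq ι] [Fintype ι] (k : ℕ) (f : ι → ℝ) : ℝ :=
  ∑ t ∈ Finset.univ.powersetCard k, ∏ i ∈ t, f i

/-- `Q k f = S_{k+1}(f) / S_k(f)`. -/
noncomputable def Q {ι : Type*} [DecidableEq ι] [Fintype ι] (k : ℕ) (f : ι → ℝ) : ℝ :=
  eS (k + 1) f / eS k f

/-- `pdQ k i f` is the `i`-th partial derivative `∂Q_k/∂λ_i` evaluated at `f`. -/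
noncomputable def pdQ {n : ℕ} (k : ℕ) (i : Fin n) (f : Fin n → ℝ) : ℝ :=
  deriv (fun s : ℝ => Q k (f + s • (Pi.single i 1 : Fin n → ℝ))) 0

/-- Auxiliary: elementary symmetric polynomial in the entries other than `i`. -/
noncomputable def Ee {n : ℕ} (i : Fin n) (m : ℕ) (f : Fin n → ℝ) : ℝ :=
  ∑ t ∈ ((Finset.univ : Finset (Fin n)).erase i).powersetCard m, ∏ j ∈ t, f j

lemma eS_zero {n : ℕ} (f : Fin n → ℝ) : eS 0 f = 1 := by
  simp [eS, powersetCard_zero]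

lemma eS_one {n : ℕ} (f : Fin n → ℝ) : eS 1 f = ∑ i, f i := by
  rw [eS, powersetCard_one, sum_map]
  simp

/-- Decomposition `S_{m+1} = E_i^{m+1} + f i * E_i^m`. -/
lemma eS_decomp {n : ℕ} (i : Fin n) (m : ℕ) (f : Fin n → ℝ) :
    eS (m + 1) f = Ee i (m + 1) f + f i * Ee i m f := by
  have hu : (Finset.univ : Finset (Fin n)) = insert i (Finset.univ.erase i) :=
    (insert_erase (mem_univ i)).symm
  have hnotmem : i ∉ (Finset.univ : Finset (Fin n)).erase i := notMem_erase i _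
  rw [eS]
  conv_lhs => rw [hu]
  rw [powersetCard_succ_insert hnotmem]
  have hdisj : Disjoint (((Finset.univ : Finset (Fin n)).erase i).powersetCard (m + 1))
      ((((Finset.univ : Finset (Fin n)).erase i).powersetCard m).image (insert i)) := by
    rw [disjoint_right]
    intro t ht ht'
    obtain ⟨u, hu', rfl⟩ := mem_image.1 ht
    have hsub := (mem_powersetCard.1 ht').1
    exact (mem_erase.1 (hsub (mem_insert_self i u))).1 rfl
  rw [sum_union hdisj]
  congr 1
  rw [sum_image, Ee, mul_sum]
  · refine sum_congr rfl fun t ht => ?_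
    rw [prod_insert]
    exact fun h => (mem_erase.1 ((mem_powersetCard.1 ht).1 h)).1 rfl
  · intro t ht u hu h
    have hti : i ∉ t := fun h' => (mem_erase.1 ((mem_powersetCard.1 ht).1 h')).1 rfl
    have hui : i ∉ u := fun h' => (mem_erase.1 ((mem_powersetCard.1 hu).1 h')).1 rfl
    rw [← erase_insert hti, h, erase_insert hui]

/-- `Ee` only depends on the entries other than `i`. -/
lemma Ee_congr {n : ℕ} (i : Fin n) (m : ℕ) {f g : Fin n → ℝ}
    (h : ∀ j, j ≠ i → g j = f j) : Ee i m g = Ee i m f := by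
  refine sum_congr rfl fun t ht => prod_congr rfl fun j hj => ?_
  exact h j (mem_erase.1 ((mem_powersetCard.1 ht).1 hj)).1

/-- Euler-type identity: `∑ i, f i * E_i^m = (m+1) * S_{m+1}`. -/
lemma euler_sum {n : ℕ} (m : ℕ) (f : Fin n → ℝ) :
    ∑ i, f i * Ee i m f = ((m : ℝ) + 1) * eS (m + 1) f := by
  have h1 : ∀ i : Fin n, f i * Ee i m f
      = ∑ t ∈ ((Finset.univ : Finset (Fin n)).erase i).powersetCard m,
          ∏ j ∈ insert i t, f j := by
    intro i
    rw [Ee, mul_sum]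
    refine sum_congr rfl fun t ht => ?_
    rw [prod_insert]
    exact fun h => (mem_erase.1 ((mem_powersetCard.1 ht).1 h)).1 rfl
  simp_rw [h1]
  rw [sum_sigma']
  have h2 : ((m : ℝ) + 1) * eS (m + 1) f
      = ∑ p ∈ ((Finset.univ : Finset (Fin n)).powersetCard (m + 1)).sigma
          (fun s => (s : Finset (Fin n))), ∏ j ∈ p.1, f j := by
    rw [sum_sigma, eS, mul_sum]
    refine sum_congr rfl fun s hs => ?_
    dsimp only
    rw [sum_const, nsmul_eq_mul, (mem_powersetCard.1 hs).2]
    push_cast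
    ring
  rw [h2]
  refine sum_nbij' (i := fun p => ⟨insert p.1 p.2, p.1⟩) (j := fun p => ⟨p.2, p.1.erase p.2⟩)
    ?_ ?_ ?_ ?_ ?_
  · rintro ⟨i, t⟩ hp
    have ht := mem_sigma.1 hp
    have hmem := mem_powersetCard.1 ht.2
    have hti : i ∉ t := fun h => (mem_erase.1 (hmem.1 h)).1 rfl
    refine mem_sigma.2 ⟨mem_powersetCard.2 ⟨subset_univ _, ?_⟩, mem_insert_self i t⟩
    rw [card_insert_of_notMem hti, hmem.2]
  · rintro ⟨s, i⟩ hp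
    have hs := mem_sigma.1 hp
    have hmem := mem_powersetCard.1 hs.1
    refine mem_sigma.2 ⟨mem_univ i, mem_powersetCard.2 ⟨?_, ?_⟩⟩
    · exact fun j hj => mem_erase.2 ⟨(mem_erase.1 hj).1, mem_univ j⟩
    · rw [card_erase_of_mem hs.2, hmem.2]
      omega
  · rintro ⟨i, t⟩ hp
    have ht := mem_sigma.1 hp
    have hti : i ∉ t := fun h => (mem_erase.1 ((mem_powersetCard.1 ht.2).1 h)).1 rfl
    simp [erase_insert hti]
  · rintro ⟨s, i⟩ hp
    have hs := mem_sigma.1 hp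
    simp [insert_erase hs.2]
  · rintro ⟨i, t⟩ _
    rfl

/-- The perturbed tuple agrees with `f` away from `i`. -/
lemma pert_ne {n : ℕ} (i j : Fin n) (s : ℝ) (f : Fin n → ℝ) (h : j ≠ i) :
    (f + s • (Pi.single i 1 : Fin n → ℝ)) j = f j := by
  simp [Pi.single_eq_of_ne h]

lemma pert_eq {n : ℕ} (i : Fin n) (s : ℝ) (f : Fin n → ℝ) :
    (f + s • (Pi.single i 1 : Fin n → ℝ)) i = f i + s := by
  simp

lemma pert_zero {n : ℕ} (i : Fin n) (f : Fin n → ℝ) :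
    f + (0 : ℝ) • (Pi.single i 1 : Fin n → ℝ) = f := by
  funext j; simp

/-- Derivative of the perturbed symmetric function. -/
noncomputable def Dv {n : ℕ} (i : Fin n) (m : ℕ) (f : Fin n → ℝ) : ℝ :=
  match m with
  | 0 => 0
  | m + 1 => Ee i m f

lemma hasDerivAt_eS {n : ℕ} (i : Fin n) (m : ℕ) (f : Fin n → ℝ) :
    HasDerivAt (fun s : ℝ => eS m (f + s • (Pi.single i 1 : Fin n → ℝ))) (Dv i m f) 0 := by
  cases m with
  | zero =>
      have : (fun s : ℝ => eS 0 (f + s • (Pi.single i 1 : Fin n → ℝ))) = fun _ => (1 : ℝ) := by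
        funext s; exact eS_zero _
      rw [this]
      exact hasDerivAt_const 0 1
  | succ m =>
      have heq : (fun s : ℝ => eS (m + 1) (f + s • (Pi.single i 1 : Fin n → ℝ)))
          = fun s : ℝ => Ee i (m + 1) f + (f i + s) * Ee i m f := by
        funext s
        rw [eS_decomp i m, Ee_congr i (m + 1) (fun j hj => pert_ne i j s f hj),
          Ee_congr i m (fun j hj => pert_ne i j s f hj), pert_eq]
      rw [heq]
      have h : HasDerivAt (fun s : ℝ => Ee i (m + 1) f + (f i + s) * Ee i m f)
          (1 * Ee i m f) 0 :=
        (((hasDerivAt_id (0 : ℝ)).const_add (f i)).mul_const (Ee i m f)).const_add _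
      simpa [Dv] using h

lemma pdQ_eq {n : ℕ} (k : ℕ) (i : Fin n) (f : Fin n → ℝ) (hS : eS k f ≠ 0) :
    pdQ k i f = (Dv i (k + 1) f * eS k f - eS (k + 1) f * Dv i k f) / (eS k f) ^ 2 := by
  have h1 := hasDerivAt_eS i (k + 1) f
  have h2 := hasDerivAt_eS i k f
  have hne : eS k (f + (0 : ℝ) • (Pi.single i 1 : Fin n → ℝ)) ≠ 0 := by
    rw [pert_zero]; exact hS
  have hdiv := h1.div h2 hne
  have heq : (fun s : ℝ => Q k (f + s • (Pi.single i 1 : Fin n → ℝ)))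
      = fun s : ℝ => eS (k + 1) (f + s • (Pi.single i 1 : Fin n → ℝ))
          / eS k (f + s • (Pi.single i 1 : Fin n → ℝ)) := by
    funext s; rfl
  rw [pdQ, heq]
  rw [pert_zero] at hdiv
  exact hdiv.deriv

/-- For `0 ≤ k ≤ n−1` and `λ ∈ ℝⁿ` with `S_k(λ) ≠ 0`:
`∑_{i=1}^n λ_i² (∂Q_k/∂λ_i)(λ) = (k+1)Q_k(λ)² − (k+2)·S_{k+2}(λ)/S_k(λ)`; equivalently, if
moreover `S_{k+1}(λ) ≠ 0`, this equals `(k+1)Q_k(λ)² − (k+2)Q_{k+1}(λ)Q_k(λ)`. -/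
theorem sum_sq_mul_pdQ (n k : ℕ) (hk : k + 1 ≤ n) (lam : Fin n → ℝ) (hS : eS k lam ≠ 0) :
    (∑ i, (lam i) ^ 2 * pdQ k i lam
        = ((k : ℝ) + 1) * (Q k lam) ^ 2 - ((k : ℝ) + 2) * eS (k + 2) lam / eS k lam)
    ∧ (eS (k + 1) lam ≠ 0 →
        ∑ i, (lam i) ^ 2 * pdQ k i lam
          = ((k : ℝ) + 1) * (Q k lam) ^ 2 - ((k : ℝ) + 2) * Q (k + 1) lam * Q k lam) := by
  -- Key sum 1: ∑ λᵢ² Eᵢᵐ = S₁ S_{m+1} − (m+2) S_{m+2}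
  have key : ∀ m : ℕ, ∑ i, (lam i) ^ 2 * Ee i m lam
      = eS 1 lam * eS (m + 1) lam - ((m : ℝ) + 2) * eS (m + 2) lam := by
    intro m
    have h1 : ∀ i : Fin n, (lam i) ^ 2 * Ee i m lam
        = lam i * eS (m + 1) lam - lam i * Ee i (m + 1) lam := by
      intro i
      have h2 : lam i * Ee i m lam = eS (m + 1) lam - Ee i (m + 1) lam := by
        have := eS_decomp i m lam; linarith
      rw [pow_two, mul_assoc, h2]; ring
    simp_rw [h1]
    rw [sum_sub_distrib, ← sum_mul, ← eS_one, euler_sum (m + 1) lam]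
    push_cast
    ring
  -- Key sum 2: ∑ λᵢ² Dvᵢᵏ = S₁ S_k − (k+1) S_{k+1}  (holds for all k, including k = 0)
  have key2 : ∑ i, (lam i) ^ 2 * Dv i k lam
      = eS 1 lam * eS k lam - ((k : ℝ) + 1) * eS (k + 1) lam := by
    cases k with
    | zero => simp [Dv, eS_zero]
    | succ m =>
        have := key m
        simp only [Dv]
        rw [this]
        push_cast
        ring_nf
  have hpd : ∑ i, (lam i) ^ 2 * pdQ k i lam
      = ((∑ i, (lam i) ^ 2 * Ee i k lam) * eS k lam
          - eS (k + 1) lam * ∑ i, (lam i) ^ 2 * Dv i k lam) / (eS k lam) ^ 2 := by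
    calc ∑ i, (lam i) ^ 2 * pdQ k i lam
        = ∑ i, ((lam i ^ 2 * Ee i k lam) * eS k lam
            - eS (k + 1) lam * (lam i ^ 2 * Dv i k lam)) / (eS k lam) ^ 2 := by
          refine sum_congr rfl fun i _ => ?_
          rw [pdQ_eq k i lam hS, show Dv i (k + 1) lam = Ee i k lam from rfl]; ring
      _ = _ := by rw [← sum_div, sum_sub_distrib, ← sum_mul, ← mul_sum]
  have hmain : ∑ i, (lam i) ^ 2 * pdQ k i lam
      = ((k : ℝ) + 1) * (Q k lam) ^ 2 - ((k : ℝ) + 2) * eS (k + 2) lam / eS k lam := by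
    rw [hpd, key k, key2, Q]
    field_simp
    ring
  refine ⟨hmain, fun hS1 => ?_⟩
  rw [hmain]
  have hq : ((k : ℝ) + 2) * eS (k + 2) lam / eS k lam
      = ((k : ℝ) + 2) * Q (k + 1) lam * Q k lam := by
    rw [Q, Q]
    field_simp
  rw [hq]
end

section
/- For all integers 0 ≤ l ≤ k ≤ n−1 and every λ ∈ Γ_{k+1} ⊂ ℝⁿ, one has Q_k(λ) ≤ ((l+1)(n−k))/((k+1)(n−l)) · Q_l(λ). -/
open Finset

/-- The Garding cone `Γ_m = {λ ∈ ℝⁿ : S_l(λ) > 0 for l = 1,…,m}`. -/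
def Gamma (n m : ℕ) : Set (Fin n → ℝ) :=
  {lam | ∀ l : ℕ, 1 ≤ l → l ≤ m → 0 < eS l lam}


section NewtonAux
open Polynomial
open Polynomial

lemma splits_derivative (p : ℝ[X]) (hp : p.Splits) :
    p.derivative.Splits := by
  by_cases hd : derivative p = 0
  · rw [hd]; exact Splits.zero
  have hp0 : p ≠ 0 := fun h => hd (by simp [h])
  have h1 : Multiset.card p.roots = p.natDegree := splits_iff_card_roots.mp hp
  have h2 := Polynomial.card_roots_le_derivative p
  have h3 := Polynomial.natDegree_derivative_le p
  have h4 := Polynomial.card_roots' p.derivative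
  have hnd : p.natDegree ≠ 0 := by
    intro h
    exact hd (derivative_of_natDegree_zero h)
  exact splits_iff_card_roots.mpr (by omega)

lemma splits_iterate_derivative (p : ℝ[X]) (hp : p.Splits) (k : ℕ) :
    (derivative^[k] p).Splits := by
  induction k with
  | zero => exact hp
  | succ k ih => rw [Function.iterate_succ_apply']; exact splits_derivative _ ih

lemma splits_reverse (p : ℝ[X]) (hp : p.Splits) :
    p.reverse.Splits := by
  by_cases hp0 : p = 0
  · simp [hp0, Splits.zero]
  have key : ∀ s : Multiset ℝ,
      ((s.map fun r => X - C r).prod.reverse).Splits := by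
    intro s
    induction s using Multiset.induction with
    | empty =>
        simp only [Multiset.map_zero, Multiset.prod_zero, Polynomial.reverse,
          Polynomial.reflect_one, natDegree_one, pow_zero]
        exact Splits.one
    | cons r s ih =>
        rw [Multiset.map_cons, Multiset.prod_cons, Polynomial.reverse_mul_of_domain]
        refine Splits.mul (Splits.of_natDegree_le_one ?_) ih
        exact (Polynomial.reverse_natDegree_le _).trans (by simp [natDegree_X_sub_C])
  have h := hp.eq_prod_roots
  rw [h, Polynomial.reverse_mul_of_domain, Polynomial.reverse_C]
  exact Splits.mul (Splits.C _) (key _)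

lemma natDegree_reflect_le {p : ℝ[X]} {N : ℕ} (h : p.natDegree ≤ N) :
    (p.reflect N).natDegree ≤ N := by
  refine Polynomial.natDegree_le_iff_coeff_eq_zero.mpr fun i hi => ?_
  rw [Polynomial.coeff_reflect, Polynomial.revAt_eq_self_of_lt hi]
  exact Polynomial.coeff_eq_zero_of_natDegree_lt (lt_of_le_of_lt h hi)

lemma splits_reflect (p : ℝ[X]) (hp : p.Splits) {N : ℕ}
    (hN : p.natDegree ≤ N) (hrev : p.reverse.Splits) :
    (p.reflect N).Splits := by
  have h1 : p.reflect N = reflect (N - p.natDegree) 1 * reflect p.natDegree p := by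
    rw [← Polynomial.reflect_mul (1 : ℝ[X]) p (by simp) le_rfl, one_mul,
      Nat.sub_add_cancel hN]
  rw [h1, Polynomial.reflect_one]
  exact Splits.mul (Splits.X_pow _) hrev

lemma discrim_of_splits (q : ℝ[X]) (hq : q.Splits) (hd : q.natDegree ≤ 2) :
    4 * (q.coeff 2 * q.coeff 0) ≤ (q.coeff 1) ^ 2 := by
  by_cases ha : q.coeff 2 = 0
  · rw [ha]; nlinarith [sq_nonneg (q.coeff 1)]
  have hdeg : q.natDegree = 2 := le_antisymm hd (Polynomial.le_natDegree_of_ne_zero ha)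
  have hq0 : q ≠ 0 := fun h => ha (by simp [h])
  have hdeg' : q.degree = 2 := by rw [Polynomial.degree_eq_natDegree hq0, hdeg]; rfl
  obtain ⟨x, hx⟩ := Splits.exists_eval_eq_zero hq (by rw [hdeg']; exact (by norm_num))
  replace hx : q.eval x = 0 := hx
  have heval : q.coeff 2 * (x * x) + q.coeff 1 * x + q.coeff 0 = 0 := by
    have h0 := Polynomial.eval_eq_sum_range (x := x) (p := q)
    rw [h0, hdeg] at hx
    simp [Finset.sum_range_succ] at hx
    nlinarith [hx]
  have h2 := discrim_eq_sq_of_quadratic_eq_zero heval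
  rw [discrim] at h2
  nlinarith [sq_nonneg (2 * q.coeff 2 * x + q.coeff 1)]
open Finset Polynomial


lemma dfA : ∀ m : ℕ, (m + 1).descFactorial m = (m + 1).factorial
  | 0 => rfl
  | m + 1 => by
      rw [Nat.succ_descFactorial_succ, dfA m]
      rw [show m + 1 + 1 = m + 2 from rfl, Nat.factorial_succ (m+1)]

lemma dfB : ∀ m : ℕ, (m + 2).descFactorial m * 2 = (m + 2).factorial
  | 0 => rfl
  | m + 1 => by
      have h1 : m + 1 + 2 = (m + 2) + 1 := by omega
      rw [h1, Nat.succ_descFactorial_succ, Nat.factorial_succ (m+2), ← dfB m]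
      ring

lemma coeff_prod_X_add_C (n : ℕ) (lam : Fin n → ℝ) (j : ℕ) (hj : j ≤ n) :
    (∏ i : Fin n, (X + C (lam i))).coeff j = eS (n - j) lam := by
  have hcard : #(Finset.univ : Finset (Fin n)) = n := by simp
  rw [Finset.prod_X_add_C_coeff _ _ (by rw [hcard]; exact hj), hcard, eS]

lemma newton_ineq (n m : ℕ) (hm : m + 2 ≤ n) (lam : Fin n → ℝ) :
    ((m : ℝ) + 2) * ((n : ℝ) - m) * (eS m lam * eS (m + 2) lam) ≤
      ((m : ℝ) + 1) * ((n : ℝ) - m - 1) * (eS (m + 1) lam) ^ 2 := by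
  set D : ℕ := n - (m + 2) with hD
  set P : ℝ[X] := ∏ i : Fin n, (X + C (lam i)) with hP
  have hPsplits : P.Splits :=
    Splits.prod fun i _ => Splits.of_natDegree_le_one (by simp [natDegree_X_add_C])
  have hPdeg : P.natDegree = n := by
    rw [hP, Polynomial.natDegree_prod _ _ (fun i _ => Polynomial.X_add_C_ne_zero (lam i))]
    simp [natDegree_X_add_C]
  set Q1 : ℝ[X] := derivative^[D] P with hQ1
  have hQ1splits : Q1.Splits := splits_iterate_derivative _ hPsplits _
  have hQ1deg : Q1.natDegree ≤ m + 2 := by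
    have h : Q1.natDegree ≤ P.natDegree - D := Polynomial.natDegree_iterate_derivative P D
    omega
  have hQ1c : ∀ j : ℕ, j ≤ 2 → Q1.coeff j =
      ((j + D).descFactorial D : ℝ) * eS (m + 2 - j) lam := by
    intro j hj
    rw [hQ1, Polynomial.coeff_iterate_derivative, nsmul_eq_mul,
      coeff_prod_X_add_C n lam (j + D) (by omega)]
    congr 2
    omega
  set Q2 : ℝ[X] := derivative^[m] (Q1.reflect (m + 2)) with hQ2
  have hQ2splits : Q2.Splits :=
    splits_iterate_derivative _
      (splits_reflect _ hQ1splits hQ1deg (splits_reverse _ hQ1splits)) _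
  have hQ2deg : Q2.natDegree ≤ 2 := by
    have h1 : (Q1.reflect (m + 2)).natDegree ≤ m + 2 := natDegree_reflect_le hQ1deg
    have h2 : Q2.natDegree ≤ (Q1.reflect (m + 2)).natDegree - m :=
      Polynomial.natDegree_iterate_derivative _ m
    omega
  have hQ2c : ∀ j : ℕ, j ≤ 2 → Q2.coeff j =
      ((j + m).descFactorial m : ℝ) * Q1.coeff (2 - j) := by
    intro j hj
    rw [hQ2, Polynomial.coeff_iterate_derivative, nsmul_eq_mul,
      Polynomial.coeff_reflect, Polynomial.revAt_le (by omega)]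
    congr 2
    omega
  have hkey := discrim_of_splits Q2 hQ2splits hQ2deg
  rw [hQ2c 0 (by norm_num), hQ2c 1 (by norm_num), hQ2c 2 (by norm_num),
    hQ1c 0 (by norm_num), hQ1c 1 (by norm_num), hQ1c 2 (by norm_num)] at hkey
  norm_num at hkey
  rw [show 2 + m = m + 2 from by omega, show 1 + m = m + 1 from by omega] at hkey
  -- now hkey is an inequality between real numbers involving descFactorials
  set M : ℝ := (m.factorial : ℝ) with hM
  set Df : ℝ := (D.factorial : ℝ) with hDf
  have hMpos : 0 < M := by positivity
  have hDfpos : 0 < Df := by positivity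
  have e0 : (m.descFactorial m : ℝ) = M := by rw [hM, Nat.descFactorial_self]
  have e1 : ((m + 1).descFactorial m : ℝ) = ((m : ℝ) + 1) * M := by
    rw [dfA m]; push_cast [Nat.factorial_succ]; ring
  have e2 : ((m + 2).descFactorial m : ℝ) * 2 = ((m : ℝ) + 2) * ((m : ℝ) + 1) * M := by
    have := dfB m
    have h2 : (((m + 2).descFactorial m * 2 : ℕ) : ℝ) = ((m + 2).factorial : ℝ) := by
      exact_mod_cast congrArg (Nat.cast : ℕ → ℝ) this
    push_cast [Nat.factorial_succ] at h2
    push_cast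
    rw [h2]
    push_cast [Nat.factorial_succ]
    ring
  have f0 : (D.descFactorial D : ℝ) = Df := by rw [hDf, Nat.descFactorial_self]
  have f1 : ((1 + D : ℕ).descFactorial D : ℝ) = ((D : ℝ) + 1) * Df := by
    rw [show 1 + D = D + 1 from by omega, dfA D]; push_cast [Nat.factorial_succ]; ring
  have f2 : ((2 + D : ℕ).descFactorial D : ℝ) * 2 = ((D : ℝ) + 2) * ((D : ℝ) + 1) * Df := by
    have := dfB D
    have h2 : (((D + 2).descFactorial D * 2 : ℕ) : ℝ) = ((D + 2).factorial : ℝ) := by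
      exact_mod_cast congrArg (Nat.cast : ℕ → ℝ) this
    push_cast [Nat.factorial_succ] at h2
    rw [show (2 + D) = D + 2 from by omega]
    push_cast
    rw [h2]
    push_cast [Nat.factorial_succ]
    ring
  rw [e0, f0] at hkey
  have hcast1 : (D : ℝ) + 2 = (n : ℝ) - m := by
    have : (D : ℝ) = (n : ℝ) - (m + 2) := by
      rw [hD]; push_cast [Nat.cast_sub hm]; ring
    rw [this]; ring
  have hcast2 : (D : ℝ) + 1 = (n : ℝ) - m - 1 := by
    have : (D : ℝ) = (n : ℝ) - (m + 2) := by
      rw [hD]; push_cast [Nat.cast_sub hm]; ring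
    rw [this]; ring
  set s0 : ℝ := eS m lam
  set s1 : ℝ := eS (m + 1) lam
  set s2 : ℝ := eS (m + 2) lam
  have hc : (0 : ℝ) < ((m : ℝ) + 1) * ((D : ℝ) + 1) * (M * Df) ^ 2 := by positivity
  rw [← hcast2, ← hcast1]
  refine (mul_le_mul_iff_of_pos_left hc).mp ?_
  calc ((m : ℝ) + 1) * ((D : ℝ) + 1) * (M * Df) ^ 2 *
        (((m : ℝ) + 2) * ((D : ℝ) + 2) * (s0 * s2))
      = 4 * (((m + 2).descFactorial m : ℝ) * (Df * s2) *
          (M * (((2 + D : ℕ).descFactorial D : ℝ) * s0))) := by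
        linear_combination (-(Df * s2 * M * s0)) *
          (2 * (((m + 2).descFactorial m : ℝ)) * f2 +
            ((D : ℝ) + 2) * ((D : ℝ) + 1) * Df * e2)
    _ ≤ (((m + 1).descFactorial m : ℝ) * (((1 + D : ℕ).descFactorial D : ℝ) * s1)) ^ 2 :=
        hkey
    _ = ((m : ℝ) + 1) * ((D : ℝ) + 1) * (M * Df) ^ 2 *
        (((m : ℝ) + 1) * ((D : ℝ) + 1) * s1 ^ 2) := by
        rw [e1, f1]; ring

end NewtonAux

lemma eS_zero_s6 {ι : Type*} [DecidableEq ι] [Fintype ι] (f : ι → ℝ) : eS 0 f = 1 := by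
  simp [eS]

lemma Q_step (n m : ℕ) (hm : m + 2 ≤ n) (lam : Fin n → ℝ)
    (h0 : 0 < eS m lam) (h1 : 0 < eS (m + 1) lam) :
    Q (m + 1) lam ≤ (((m : ℝ) + 1) * ((n : ℝ) - (m + 1))) / (((m : ℝ) + 2) * ((n : ℝ) - m)) *
      Q m lam := by
  have hnm : (2 : ℝ) ≤ (n : ℝ) - m := by
    have : ((m + 2 : ℕ) : ℝ) ≤ (n : ℝ) := by exact_mod_cast hm
    push_cast at this; linarith
  have hnew := newton_ineq n m hm lam
  have hE : eS (m + 1 + 1) lam = eS (m + 2) lam := by norm_num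
  have hdpos : (0 : ℝ) < ((m : ℝ) + 2) * ((n : ℝ) - m) * eS m lam := by
    apply mul_pos _ h0
    nlinarith
  rw [Q, Q, div_mul_div_comm, div_le_div_iff₀ h1 hdpos, hE]
  nlinarith [hnew, h1]

/-- For all `0 ≤ l ≤ k ≤ n−1` and every `λ ∈ Γ_{k+1} ⊂ ℝⁿ`:
`Q_k(λ) ≤ ((l+1)(n−k))/((k+1)(n−l)) · Q_l(λ)`. -/
theorem Q_monotone_quotient (n k l : ℕ) (hlk : l ≤ k) (hk : k + 1 ≤ n)
    (lam : Fin n → ℝ) (hlam : lam ∈ Gamma n (k + 1)) :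
    Q k lam ≤ (((l : ℝ) + 1) * ((n : ℝ) - k)) / (((k : ℝ) + 1) * ((n : ℝ) - l)) * Q l lam := by
  induction k with
  | zero =>
      interval_cases l
      have hne : ((0 : ℝ) + 1) * ((n : ℝ) - 0) ≠ 0 := by
        have : (1 : ℝ) ≤ (n : ℝ) := by exact_mod_cast hk
        simp; linarith
      rw [Nat.cast_zero, div_self hne, one_mul]
  | succ m ih =>
      rcases Nat.lt_or_ge l (m + 1) with hl | hl
      · -- l ≤ m, use step + IH
        have hm2 : m + 2 ≤ n := hk
        have hlm : l ≤ m := by omega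
        have hm1n : m + 1 ≤ n := by omega
        have hlam' : lam ∈ Gamma n (m + 1) := fun j hj1 hj2 => hlam j hj1 (by omega)
        have h0 : 0 < eS m lam := by
          rcases Nat.eq_zero_or_pos m with h | h
          · rw [h, eS_zero_s6]; norm_num
          · exact hlam m h (by omega)
        have h1 : 0 < eS (m + 1) lam := hlam (m + 1) (by omega) (by omega)
        have hstep := Q_step n m hm2 lam h0 h1
        have hIH := ih hlm hm1n hlam'
        have hcpos : (0 : ℝ) ≤ (((m : ℝ) + 1) * ((n : ℝ) - (m + 1))) /
            (((m : ℝ) + 2) * ((n : ℝ) - m)) := by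
          have h2 : ((m + 2 : ℕ) : ℝ) ≤ (n : ℝ) := by exact_mod_cast hm2
          push_cast at h2
          apply div_nonneg <;> nlinarith
        calc Q (m + 1) lam ≤ (((m : ℝ) + 1) * ((n : ℝ) - (m + 1))) /
              (((m : ℝ) + 2) * ((n : ℝ) - m)) * Q m lam := hstep
          _ ≤ (((m : ℝ) + 1) * ((n : ℝ) - (m + 1))) / (((m : ℝ) + 2) * ((n : ℝ) - m)) *
              ((((l : ℝ) + 1) * ((n : ℝ) - m)) / (((m : ℝ) + 1) * ((n : ℝ) - l)) * Q l lam) :=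
            mul_le_mul_of_nonneg_left hIH hcpos
          _ = (((l : ℝ) + 1) * ((n : ℝ) - (m + 1))) /
              (((m : ℝ) + 1 + 1) * ((n : ℝ) - l)) * Q l lam := by
            have h2 : ((m + 2 : ℕ) : ℝ) ≤ (n : ℝ) := by exact_mod_cast hm2
            have h3 : ((l : ℝ)) ≤ (m : ℝ) := by exact_mod_cast hlm
            push_cast at h2
            have d1 : ((m : ℝ) + 2) ≠ 0 := by positivity
            have d2 : ((n : ℝ) - m) ≠ 0 := by nlinarith
            have d3 : ((m : ℝ) + 1) ≠ 0 := by positivity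
            have d4 : ((n : ℝ) - l) ≠ 0 := by nlinarith
            field_simp
            ring
          _ = (((l : ℝ) + 1) * ((n : ℝ) - (m + 1 : ℕ))) /
              ((((m + 1 : ℕ) : ℝ) + 1) * ((n : ℝ) - l)) * Q l lam := by push_cast; ring_nf
      · -- l = m + 1
        have : l = m + 1 := by omega
        subst this
        have hne : (((m + 1 : ℕ) : ℝ) + 1) * ((n : ℝ) - (m + 1 : ℕ)) ≠ 0 := by
          have h2 : ((m + 2 : ℕ) : ℝ) ≤ (n : ℝ) := by exact_mod_cast hk
          push_cast at h2 ⊢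
          have : (0:ℝ) < ((m:ℝ) + 1 + 1) * ((n:ℝ) - (m + 1)) := by nlinarith
          exact ne_of_gt this
        rw [div_self hne, one_mul]
end

section
/- Let n ≥ 2 and let A be an n×n real symmetric arrowhead matrix (A_{ij} = 0 for all 2 ≤ i ≠ j ≤ n). Then for every integer l ≥ 0, S_l(A) = S_l(λ̃) + A_{11} S_{l−1}(λ̃) − ∑_{j=2}^n A_{1j}² S_{l−2}(λ̃|j), where λ̃ = (A_{22},…,A_{nn}) ∈ ℝ^{n−1}. -/
open Finset

/-- `eSZ l f` is the elementary symmetric polynomial of integer degree `l` in the entries of `f`,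
with the convention that it vanishes for negative `l`. -/
noncomputable def eSZ {ι : Type*} [DecidableEq ι] [Fintype ι] (l : ℤ) (f : ι → ℝ) : ℝ :=
  if 0 ≤ l then eS l.toNat f else 0

/-- `mS l B` is the sum of all `l×l` principal minors of the matrix `B`, so that
`det (t•1 + B) = ∑ l, mS l B * t^(n-l)`; in particular `mS 0 B = 1` and `mS l B = 0` for
`l > card ι`. -/
noncomputable def mS {ι : Type*} [DecidableEq ι] [Fintype ι] (l : ℕ) (B : Matrix ι ι ℝ) : ℝ :=
  ∑ t ∈ Finset.univ.powersetCard l,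
    Matrix.det (Matrix.of fun i j : {x : ι // x ∈ t} => B i.1 j.1)

/-- `mSZ l B` is `mS l B` for `l ≥ 0` and `0` for negative `l`. -/
noncomputable def mSZ {ι : Type*} [DecidableEq ι] [Fintype ι] (l : ℤ) (B : Matrix ι ι ℝ) : ℝ :=
  if 0 ≤ l then mS l.toNat B else 0

/-- Determinant of an arrowhead matrix with head at index `a`. -/
lemma det_arrowhead {ι : Type*} [DecidableEq ι] [Fintype ι] (a : ι) (M : Matrix ι ι ℝ)
    (h : ∀ i j, i ≠ a → j ≠ a → i ≠ j → M i j = 0) :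
    M.det = M a a * ∏ i ∈ univ.erase a, M i i
      - ∑ j ∈ univ.erase a, M a j * M j a * ∏ i ∈ (univ.erase a).erase j, M i i := by
  classical
  set S : Finset (Equiv.Perm ι) :=
    insert 1 ((univ.erase a).image (fun j => Equiv.swap a j)) with hS
  rw [Matrix.det_apply]
  rw [← Finset.sum_subset (Finset.subset_univ S)]
  · -- compute the sum over S
    have hnot1 : (1 : Equiv.Perm ι) ∉ (univ.erase a).image (fun j => Equiv.swap a j) := by
      simp only [mem_image, mem_erase] at *
      rintro ⟨j, ⟨hj, -⟩, hswap⟩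
      have := congrFun (congrArg (fun e : Equiv.Perm ι => (e : ι → ι)) hswap) a
      simp [Equiv.swap_apply_left] at this
      exact hj this
    rw [hS, Finset.sum_insert hnot1, Finset.sum_image (by
      intro x hx y hy hxy
      have := congrFun (congrArg (fun e : Equiv.Perm ι => (e : ι → ι)) hxy) a
      simpa [Equiv.swap_apply_left] using this)]
    have hid : (Equiv.Perm.sign (1 : Equiv.Perm ι)) • ∏ i, M ((1 : Equiv.Perm ι) i) i
        = M a a * ∏ i ∈ univ.erase a, M i i := by
      simp only [Equiv.Perm.sign_one, one_smul, Equiv.Perm.one_apply]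
      rw [← Finset.mul_prod_erase univ _ (mem_univ a)]
    rw [hid]
    congr 1
    rw [← Finset.sum_neg_distrib]
    apply Finset.sum_congr rfl
    intro j hj
    have hja : j ≠ a := (mem_erase.1 hj).1
    have hsign : Equiv.Perm.sign (Equiv.swap a j) = -1 := Equiv.Perm.sign_swap (Ne.symm hja)
    rw [hsign]
    have hprod : ∏ i, M (Equiv.swap a j i) i
        = M j a * (M a j * ∏ i ∈ (univ.erase a).erase j, M i i) := by
      rw [← Finset.mul_prod_erase univ _ (mem_univ a), Equiv.swap_apply_left]
      congr 1
      rw [← Finset.mul_prod_erase (univ.erase a) _ hj, Equiv.swap_apply_right]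
      congr 1
      apply Finset.prod_congr rfl
      intro i hi
      rw [Equiv.swap_apply_of_ne_of_ne (mem_erase.1 (mem_erase.1 hi).2).1 (mem_erase.1 hi).1]
    rw [hprod, Units.neg_smul, one_smul]
    ring
  · -- terms outside S vanish
    intro σ _ hσ
    have hexists : ∃ i, i ≠ a ∧ σ i ≠ i ∧ σ i ≠ a := by
      by_contra hcon
      push_neg at hcon
      apply hσ
      simp only [hS, mem_insert, mem_image, mem_erase]
      by_cases haa : σ a = a
      · left
        ext i
        by_cases hia : i = a
        · simp [hia, haa]
        · by_cases hfix : σ i = i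
          · simp [hfix]
          · have := hcon i hia hfix
            exact absurd (σ.injective (this.trans haa.symm)) hia
      · right
        set b := σ⁻¹ a with hb
        have hσb : σ b = a := by simp [hb]
        have hba : b ≠ a := by
          intro hh
          rw [hh] at hσb
          exact haa hσb
        have hfixother : ∀ i, i ≠ a → i ≠ b → σ i = i := by
          intro i hia hib
          by_contra hfix
          have := hcon i hia hfix
          exact hib (σ.injective (this.trans hσb.symm))
        have hσa : σ a = b := by
          by_contra hab
          have := hfixother (σ a) haa hab
          exact haa (σ.injective this)
        refine ⟨b, ⟨hba, mem_univ b⟩, ?_⟩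
        ext i
        by_cases hia : i = a
        · simp [hia, hσa, Equiv.swap_apply_left]
        · by_cases hib : i = b
          · simp [hib, hσb, Equiv.swap_apply_right]
          · rw [hfixother i hia hib]
            simp [Equiv.swap_apply_of_ne_of_ne hia hib]
    obtain ⟨i, hia, hfix, hsa⟩ := hexists
    have : M (σ i) i = 0 := h _ _ hsa hia hfix
    rw [Finset.prod_eq_zero (f := fun x => M (σ x) x) (mem_univ i) this, smul_zero]

/-- `eS` of a composed function as a sum over subsets of a mapped finset. -/
lemma eS_map {ι β : Type*} [DecidableEq ι] [Fintype ι] [DecidableEq β] (e : ι ↪ β) (k : ℕ)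
    (g : β → ℝ) :
    eS k (fun i => g (e i)) = ∑ t ∈ ((univ : Finset ι).map e).powersetCard k, ∏ i ∈ t, g i := by
  rw [eS, Finset.powersetCard_map, Finset.sum_map]
  refine Finset.sum_congr rfl fun t _ => ?_
  exact (Finset.prod_map t e g).symm

/-- Let `A` be an `n×n` (`n = N+2 ≥ 2`) real symmetric arrowhead matrix (`A i j = 0` whenever
`i, j` are both different from the first index and from each other). Then for every `l ≥ 0`,
`S_l(A) = S_l(λ̃) + A_{11} S_{l−1}(λ̃) − ∑_{j≥2} A_{1j}² S_{l−2}(λ̃|j)`, where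
`λ̃ = (A_{22},…,A_{nn})`. -/
theorem mS_arrowhead (N : ℕ) (A : Matrix (Fin (N + 2)) (Fin (N + 2)) ℝ)
    (hsymm : A.IsSymm)
    (harrow : ∀ i j : Fin (N + 2), i ≠ 0 → j ≠ 0 → i ≠ j → A i j = 0)
    (l : ℕ) :
    mSZ (l : ℤ) A
      = eSZ (l : ℤ) (fun i : {x : Fin (N + 2) // x ≠ 0} => A i.1 i.1)
        + A 0 0 * eSZ ((l : ℤ) - 1) (fun i : {x : Fin (N + 2) // x ≠ 0} => A i.1 i.1)
        - ∑ j : {x : Fin (N + 2) // x ≠ 0},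
            (A 0 j.1) ^ 2 *
              eSZ ((l : ℤ) - 2)
                (fun i : {x : {y : Fin (N + 2) // y ≠ 0} // x ≠ j} => A i.1.1 i.1.1) := by
  classical
  have hsym : ∀ i j : Fin (N + 2), A j i = A i j := fun i j => hsymm.apply i j
  set E : Finset (Fin (N + 2)) := univ.erase 0 with hE
  have hmapE : (univ : Finset {x : Fin (N + 2) // x ≠ 0}).map
      (Function.Embedding.subtype fun x => x ≠ 0) = E := by
    rw [Finset.univ_map_subtype, hE, ← Finset.filter_ne']
  have heS : ∀ k : ℕ, eS k (fun i : {x : Fin (N + 2) // x ≠ 0} => A i.1 i.1)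
      = ∑ t ∈ E.powersetCard k, ∏ i ∈ t, A i i := by
    intro k
    have := eS_map (Function.Embedding.subtype fun x : Fin (N + 2) => x ≠ 0) k (fun x => A x x)
    rw [hmapE] at this
    exact this
  have heS2 : ∀ (j : {x : Fin (N + 2) // x ≠ 0}) (k : ℕ),
      eS k (fun i : {x : {y : Fin (N + 2) // y ≠ 0} // x ≠ j} => A i.1.1 i.1.1)
      = ∑ t ∈ (E.erase j.1).powersetCard k, ∏ i ∈ t, A i i := by
    intro j k
    have hmap2 : (univ : Finset {x : {y : Fin (N + 2) // y ≠ 0} // x ≠ j}).map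
        ((Function.Embedding.subtype fun x : {y : Fin (N + 2) // y ≠ 0} => x ≠ j).trans
          (Function.Embedding.subtype fun y : Fin (N + 2) => y ≠ 0)) = E.erase j.1 := by
      rw [← Finset.map_map, Finset.univ_map_subtype, Finset.filter_ne' univ j,
        Finset.map_erase, hmapE]
      rfl
    have := eS_map
      ((Function.Embedding.subtype fun x : {y : Fin (N + 2) // y ≠ 0} => x ≠ j).trans
        (Function.Embedding.subtype fun y : Fin (N + 2) => y ≠ 0)) k (fun x => A x x)
    rw [hmap2] at this
    exact this
  -- determinant of a principal submatrix not containing the head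
  have hdiag : ∀ t : Finset (Fin (N + 2)), (0 : Fin (N + 2)) ∉ t →
      Matrix.det (Matrix.of fun i j : {x : Fin (N + 2) // x ∈ t} => A i.1 j.1)
        = ∏ i ∈ t, A i i := by
    intro t h0t
    have hdm : (Matrix.of fun i j : {x : Fin (N + 2) // x ∈ t} => A i.1 j.1)
        = Matrix.diagonal (fun i : {x : Fin (N + 2) // x ∈ t} => A i.1 i.1) := by
      ext i j
      by_cases hij : i = j
      · subst hij; simp [Matrix.diagonal]
      · have h1 : i.1 ≠ 0 := fun hh => h0t (hh ▸ i.2)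
        have h2 : j.1 ≠ 0 := fun hh => h0t (hh ▸ j.2)
        have h3 : i.1 ≠ j.1 := fun hh => hij (Subtype.ext hh)
        simp [Matrix.diagonal, hij, harrow _ _ h1 h2 h3]
    rw [hdm, Matrix.det_diagonal]
    exact Finset.prod_coe_sort t (fun x => A x x)
  -- determinant of a principal submatrix containing the head
  have hdet : ∀ s : Finset (Fin (N + 2)), (0 : Fin (N + 2)) ∉ s →
      Matrix.det (Matrix.of fun i j : {x : Fin (N + 2) // x ∈ insert 0 s} => A i.1 j.1)
        = A 0 0 * ∏ i ∈ s, A i i - ∑ j ∈ s, A 0 j ^ 2 * ∏ i ∈ s.erase j, A i i := by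
    intro s h0s
    set t := insert (0 : Fin (N + 2)) s with ht
    set a : {x : Fin (N + 2) // x ∈ t} := ⟨0, mem_insert_self _ _⟩ with ha
    set M : Matrix {x : Fin (N + 2) // x ∈ t} {x : Fin (N + 2) // x ∈ t} ℝ :=
      Matrix.of fun i j => A i.1 j.1 with hM
    have harr : ∀ i j : {x : Fin (N + 2) // x ∈ t}, i ≠ a → j ≠ a → i ≠ j → M i j = 0 := by
      intro i j hia hja hij
      exact harrow _ _ (fun hh => hia (Subtype.ext hh)) (fun hh => hja (Subtype.ext hh))
        (fun hh => hij (Subtype.ext hh))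
    have hset : ((univ : Finset {x : Fin (N + 2) // x ∈ t}).erase a).map
        (Function.Embedding.subtype fun x => x ∈ t) = s := by
      rw [Finset.map_erase, Finset.univ_map_subtype, Finset.filter_univ_mem]
      exact Finset.erase_insert h0s
    have h1 : ∏ i ∈ univ.erase a, M i i = ∏ i ∈ s, A i i := by
      rw [← hset, Finset.prod_map]
      rfl
    have h2 : ∑ j' ∈ univ.erase a, M a j' * M j' a * ∏ i ∈ (univ.erase a).erase j', M i i
        = ∑ j ∈ s, A 0 j ^ 2 * ∏ i ∈ s.erase j, A i i := by
      rw [← hset, Finset.sum_map]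
      apply Finset.sum_congr rfl
      intro j' _
      have hinner : ∏ i ∈ (univ.erase a).erase j', M i i = ∏ i ∈ s.erase j'.1, A i i := by
        have hh : (((univ : Finset {x : Fin (N + 2) // x ∈ t}).erase a).erase j').map
            (Function.Embedding.subtype fun x => x ∈ t) = s.erase j'.1 := by
          rw [Finset.map_erase, hset]
          rfl
        rw [← hh, Finset.prod_map]
        rfl
      have hsq : M a j' * M j' a = A 0 j'.1 ^ 2 := by
        show A 0 j'.1 * A j'.1 0 = A 0 j'.1 ^ 2
        rw [hsym 0 j'.1, pow_two]
      rw [hinner, hsq, hset]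
      rfl
    rw [det_arrowhead a M harr, h1, h2]
    rfl
  obtain rfl | ⟨k, rfl⟩ : l = 0 ∨ ∃ k, l = k + 1 := by
    cases l with
    | zero => exact Or.inl rfl
    | succ k => exact Or.inr ⟨k, rfl⟩
  · -- case l = 0
    haveI : IsEmpty {x : Fin (N + 2) // x ∈ (∅ : Finset (Fin (N + 2)))} :=
      ⟨fun x => absurd x.2 (Finset.notMem_empty x.1)⟩
    have hm : mS 0 A = 1 := by
      rw [mS, Finset.powersetCard_zero, Finset.sum_singleton, Matrix.det_isEmpty]
    have he : eS 0 (fun i : {x : Fin (N + 2) // x ≠ 0} => A i.1 i.1) = 1 := by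
      rw [eS, Finset.powersetCard_zero, Finset.sum_singleton, Finset.prod_empty]
    norm_num [mSZ, eSZ, hm, he]
  · -- case l = k + 1
    have hcast : ((k + 1 : ℕ) : ℤ) = (k : ℤ) + 1 := by push_cast; ring
    have hm : mSZ ((k + 1 : ℕ) : ℤ) A = mS (k + 1) A := by
      rw [mSZ, if_pos (by positivity)]
      norm_num
    have he0 : eSZ ((k + 1 : ℕ) : ℤ) (fun i : {x : Fin (N + 2) // x ≠ 0} => A i.1 i.1)
        = eS (k + 1) (fun i : {x : Fin (N + 2) // x ≠ 0} => A i.1 i.1) := by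
      rw [eSZ, if_pos (by positivity)]
      norm_num
    have he1 : eSZ (((k + 1 : ℕ) : ℤ) - 1) (fun i : {x : Fin (N + 2) // x ≠ 0} => A i.1 i.1)
        = eS k (fun i : {x : Fin (N + 2) // x ≠ 0} => A i.1 i.1) := by
      rw [eSZ, if_pos (by push_cast; omega)]
      congr 1
      omega
    have key : mS (k + 1) A
        = (∑ t ∈ E.powersetCard (k + 1), ∏ i ∈ t, A i i)
          + A 0 0 * (∑ t ∈ E.powersetCard k, ∏ i ∈ t, A i i)
          - ∑ s ∈ E.powersetCard k, ∑ j ∈ s, A 0 j ^ 2 * ∏ i ∈ s.erase j, A i i := by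
      have huniv : (univ : Finset (Fin (N + 2))) = insert 0 E :=
        (Finset.insert_erase (mem_univ 0)).symm
      have hdisj : Disjoint (E.powersetCard (k + 1)) ((E.powersetCard k).image (insert 0)) := by
        rw [Finset.disjoint_left]
        intro t ht htimg
        have h0t : (0 : Fin (N + 2)) ∉ t := fun hh =>
          (Finset.notMem_erase 0 univ) ((Finset.mem_powersetCard.1 ht).1 hh)
        obtain ⟨s, -, rfl⟩ := Finset.mem_image.1 htimg
        exact h0t (mem_insert_self _ _)
      rw [mS]
      conv_lhs => rw [huniv]
      rw [Finset.powersetCard_succ_insert (Finset.notMem_erase _ _), Finset.sum_union hdisj]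
      have hA : ∑ t ∈ E.powersetCard (k + 1),
          Matrix.det (Matrix.of fun i j : {x : Fin (N + 2) // x ∈ t} => A i.1 j.1)
          = ∑ t ∈ E.powersetCard (k + 1), ∏ i ∈ t, A i i := by
        apply Finset.sum_congr rfl
        intro t ht
        exact hdiag t (fun hh => (Finset.notMem_erase 0 univ)
          ((Finset.mem_powersetCard.1 ht).1 hh))
      have hB : ∑ t ∈ (E.powersetCard k).image (insert 0),
          Matrix.det (Matrix.of fun i j : {x : Fin (N + 2) // x ∈ t} => A i.1 j.1)
          = ∑ s ∈ E.powersetCard k,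
              (A 0 0 * ∏ i ∈ s, A i i - ∑ j ∈ s, A 0 j ^ 2 * ∏ i ∈ s.erase j, A i i) := by
        rw [Finset.sum_image (by
          intro x hx y hy hxy
          have h0x : (0 : Fin (N + 2)) ∉ x := fun hh => (Finset.notMem_erase 0 univ)
            ((Finset.mem_powersetCard.1 hx).1 hh)
          have h0y : (0 : Fin (N + 2)) ∉ y := fun hh => (Finset.notMem_erase 0 univ)
            ((Finset.mem_powersetCard.1 hy).1 hh)
          rw [← Finset.erase_insert h0x, ← Finset.erase_insert h0y, hxy])]
        apply Finset.sum_congr rfl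
        intro s hs
        exact hdet s (fun hh => (Finset.notMem_erase 0 univ)
          ((Finset.mem_powersetCard.1 hs).1 hh))
      rw [hA, hB, Finset.sum_sub_distrib, ← Finset.mul_sum]
      ring
    obtain rfl | ⟨m, rfl⟩ : k = 0 ∨ ∃ m, k = m + 1 := by
      cases k with
      | zero => exact Or.inl rfl
      | succ m => exact Or.inr ⟨m, rfl⟩
    · -- l = 1
      have hlast : ∑ s ∈ E.powersetCard 0, ∑ j ∈ s, A 0 j ^ 2 * ∏ i ∈ s.erase j, A i i = 0 := by
        rw [Finset.powersetCard_zero, Finset.sum_singleton, Finset.sum_empty]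
      rw [hm, key, he0, he1, heS 1, heS 0, hlast]
      have : ∀ j : {x : Fin (N + 2) // x ≠ 0},
          eSZ (((0 + 1 : ℕ) : ℤ) - 2)
            (fun i : {x : {y : Fin (N + 2) // y ≠ 0} // x ≠ j} => A i.1.1 i.1.1) = 0 := by
        intro j
        rw [eSZ, if_neg (by norm_num)]
      simp only [this, mul_zero, Finset.sum_const_zero]
    · -- l = m + 2
      have he2 : ∀ j : {x : Fin (N + 2) // x ≠ 0},
          eSZ (((m + 1 + 1 : ℕ) : ℤ) - 2)
            (fun i : {x : {y : Fin (N + 2) // y ≠ 0} // x ≠ j} => A i.1.1 i.1.1)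
          = ∑ t ∈ (E.erase j.1).powersetCard m, ∏ i ∈ t, A i i := by
        intro j
        rw [eSZ, if_pos (by push_cast; omega)]
        rw [show ((((m + 1 + 1 : ℕ) : ℤ)) - 2).toNat = m by omega]
        exact heS2 j m
      -- exchange the double sum
      have hswap : ∑ s ∈ E.powersetCard (m + 1), ∑ j ∈ s, A 0 j ^ 2 * ∏ i ∈ s.erase j, A i i
          = ∑ j ∈ E, A 0 j ^ 2 * ∑ s' ∈ (E.erase j).powersetCard m, ∏ i ∈ s', A i i := by
        have step1 : ∀ s ∈ E.powersetCard (m + 1),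
            ∑ j ∈ s, A 0 j ^ 2 * ∏ i ∈ s.erase j, A i i
            = ∑ j ∈ E, if j ∈ s then A 0 j ^ 2 * ∏ i ∈ s.erase j, A i i else 0 := by
          intro s hs
          rw [← Finset.sum_filter, Finset.filter_mem_eq_inter,
            Finset.inter_eq_right.2 (Finset.mem_powersetCard.1 hs).1]
        rw [Finset.sum_congr rfl step1, Finset.sum_comm]
        apply Finset.sum_congr rfl
        intro j hj
        rw [← Finset.sum_filter, Finset.mul_sum]
        refine Finset.sum_bij' (fun s _ => s.erase j) (fun s' _ => insert j s')
          ?_ ?_ ?_ ?_ ?_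
        · intro s hs
          simp only [Finset.mem_filter, Finset.mem_powersetCard] at hs
          exact Finset.mem_powersetCard.2 ⟨Finset.erase_subset_erase j hs.1.1,
            by rw [Finset.card_erase_of_mem hs.2, hs.1.2]; omega⟩
        · intro s' hs'
          simp only [Finset.mem_powersetCard] at hs'
          refine Finset.mem_filter.2 ⟨Finset.mem_powersetCard.2 ⟨?_, ?_⟩, mem_insert_self _ _⟩
          · intro x hx
            rcases Finset.mem_insert.1 hx with rfl | hx
            · exact hj
            · exact Finset.erase_subset _ _ (hs'.1 hx)
          · rw [Finset.card_insert_of_notMem (fun hh => (Finset.notMem_erase j E) (hs'.1 hh)),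
              hs'.2]
        · intro s hs
          exact Finset.insert_erase (Finset.mem_filter.1 hs).2
        · intro s' hs'
          exact Finset.erase_insert (fun hh =>
            (Finset.notMem_erase j E) ((Finset.mem_powersetCard.1 hs').1 hh))
        · intro s hs
          rfl
      have hsub : ∀ g : Fin (N + 2) → ℝ, ∑ j ∈ E, g j = ∑ j : {x : Fin (N + 2) // x ≠ 0}, g j.1 := by
        intro g
        apply Finset.sum_subtype
        intro x
        simp [hE]
      have hfin : ∑ j : {x : Fin (N + 2) // x ≠ 0},
          A 0 j.1 ^ 2 * eSZ (((m + 1 + 1 : ℕ) : ℤ) - 2)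
            (fun i : {x : {y : Fin (N + 2) // y ≠ 0} // x ≠ j} => A i.1.1 i.1.1)
          = ∑ j : {x : Fin (N + 2) // x ≠ 0},
              A 0 j.1 ^ 2 * ∑ s' ∈ ((E.erase j.1).powersetCard m), ∏ i ∈ s', A i i :=
        Finset.sum_congr rfl (fun j _ => by rw [he2 j])
      rw [hm, key, he0, he1, heS (m + 1 + 1), heS (m + 1), hswap, hsub, hfin]
end

section
/- Let n ≥ 2 and let A be an n×n real symmetric arrowhead matrix (A_{ij} = 0 for all 2 ≤ i ≠ j ≤ n). Then for every 2 ≤ i ≤ n and every integer l ≥ 0, S_l(A) = S_l(A|i) + A_{ii} S_{l−1}(A|i) − A_{1i}² S_{l−2}(A|1i), where A|i (resp. A|1i) denotes the principal submatrix of A obtained by deleting row and column i (resp. rows and columns 1 and i). -/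
open Finset

/-- `dd A s` is the principal minor of `A` on the index set `s`. -/
noncomputable def dd {ι : Type*} [DecidableEq ι] [Fintype ι] (A : Matrix ι ι ℝ) (s : Finset ι) :
    ℝ :=
  (A.submatrix (Subtype.val : {x // x ∈ s} → ι) Subtype.val).det

lemma mS_eq_sum_dd {ι : Type*} [DecidableEq ι] [Fintype ι] (l : ℕ) (A : Matrix ι ι ℝ) :
    mS l A = ∑ t ∈ Finset.univ.powersetCard l, dd A t := rfl

lemma dd_empty {ι : Type*} [DecidableEq ι] [Fintype ι] (A : Matrix ι ι ℝ) :
    dd A (∅ : Finset ι) = 1 := by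
  haveI : IsEmpty {x // x ∈ (∅ : Finset ι)} := by
    constructor; rintro ⟨x, hx⟩; exact absurd hx (Finset.notMem_empty x)
  exact Matrix.det_isEmpty

lemma mS_zero {ι : Type*} [DecidableEq ι] [Fintype ι] (A : Matrix ι ι ℝ) : mS 0 A = 1 := by
  rw [mS_eq_sum_dd]
  simp only [Finset.powersetCard_zero, Finset.sum_singleton, dd_empty]

lemma dd_of_inj {ι : Type*} [DecidableEq ι] [Fintype ι] {β : Type*} [DecidableEq β] [Fintype β]
    (A : Matrix ι ι ℝ) (f : β → ι) (hinj : Function.Injective f) (s : Finset ι)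
    (hmem : ∀ b, f b ∈ s) (hsur : ∀ y ∈ s, ∃ b, f b = y) :
    (A.submatrix f f).det = dd A s := by
  have hbij : Function.Bijective (fun b => (⟨f b, hmem b⟩ : {x // x ∈ s})) := by
    constructor
    · intro a b h
      exact hinj (congrArg Subtype.val h)
    · rintro ⟨y, hy⟩
      obtain ⟨b, rfl⟩ := hsur y hy
      exact ⟨b, rfl⟩
  have : A.submatrix f f =
      (A.submatrix (Subtype.val : {x // x ∈ s} → ι) Subtype.val).submatrix
        (Equiv.ofBijective _ hbij) (Equiv.ofBijective _ hbij) := rfl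
  rw [this, Matrix.det_submatrix_equiv_self]
  rfl

lemma mS_restrict {ι : Type*} [DecidableEq ι] [Fintype ι] (A : Matrix ι ι ℝ)
    (p : ι → Prop) [DecidablePred p] (l : ℕ) :
    mS l (Matrix.of fun a b : {x // p x} => A a.1 b.1)
      = ∑ t ∈ (Finset.univ.filter p).powersetCard l, dd A t := by
  rw [mS_eq_sum_dd]
  refine Finset.sum_nbij' (fun t => t.map (Function.Embedding.subtype p))
    (fun t => t.subtype p) ?_ ?_ ?_ ?_ ?_
  · intro t ht
    simp only [Finset.mem_powersetCard] at ht ⊢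
    refine ⟨?_, by rw [Finset.card_map]; exact ht.2⟩
    intro x hx
    simp only [Finset.mem_map, Function.Embedding.coe_subtype] at hx
    obtain ⟨a, _, rfl⟩ := hx
    simp [a.2]
  · intro t ht
    simp only [Finset.mem_powersetCard] at ht ⊢
    refine ⟨Finset.subset_univ _, ?_⟩
    rw [Finset.card_subtype, Finset.filter_true_of_mem, ht.2]
    intro x hx
    exact (Finset.mem_filter.1 (ht.1 hx)).2
  · intro t _
    ext a
    simp only [Finset.mem_subtype, Finset.mem_map, Function.Embedding.coe_subtype]
    constructor
    · rintro ⟨b, hb, h⟩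
      rwa [← Subtype.ext h]
    · intro ha
      exact ⟨a, ha, rfl⟩
  · intro t ht
    simp only [Finset.mem_powersetCard] at ht
    show (t.subtype p).map (Function.Embedding.subtype p) = t
    rw [Finset.subtype_map, Finset.filter_true_of_mem]
    intro x hx
    exact (Finset.mem_filter.1 (ht.1 hx)).2
  · intro t _
    exact dd_of_inj A (fun x : {x : {x // p x} // x ∈ t} => x.1.1)
      (fun a b h => Subtype.ext (Subtype.ext h)) _
      (fun b => Finset.mem_map.2 ⟨b.1, b.2, rfl⟩)
      (fun y hy => by
        obtain ⟨a, ha, rfl⟩ := Finset.mem_map.1 hy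
        exact ⟨⟨a, ha⟩, rfl⟩)

lemma det_fin_row0 {m : ℕ} (M : Matrix (Fin (m + 1)) (Fin (m + 1)) ℝ)
    (h : ∀ j, j ≠ 0 → M 0 j = 0) :
    M.det = M 0 0 * (M.submatrix Fin.succ Fin.succ).det := by
  rw [Matrix.det_succ_row_zero, Finset.sum_eq_single 0]
  · simp [Fin.succAbove_zero]
  · intro j _ hj
    rw [h j hj]; ring
  · simp

lemma det_fin_row01 {m : ℕ} (M : Matrix (Fin (m + 2)) (Fin (m + 2)) ℝ)
    (hrow : ∀ j, j ≠ 0 → j ≠ 1 → M 0 j = 0)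
    (hcol : ∀ j, j ≠ 0 → j ≠ 1 → M j 0 = 0) :
    M.det = M 0 0 * (M.submatrix Fin.succ Fin.succ).det
      - M 0 1 * M 1 0 * (M.submatrix (Fin.succ ∘ Fin.succ) (Fin.succ ∘ Fin.succ)).det := by
  have hminor : (M.submatrix Fin.succ ((1 : Fin (m + 2)).succAbove)).det
      = M 1 0 * (M.submatrix (Fin.succ ∘ Fin.succ) (Fin.succ ∘ Fin.succ)).det := by
    set N := M.submatrix Fin.succ ((1 : Fin (m + 2)).succAbove) with hN
    have hN0 : ∀ k : Fin (m + 1), N k 0 = M k.succ 0 := by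
      intro k
      have : (1 : Fin (m + 2)).succAbove 0 = 0 := by
        rw [Fin.succAbove_of_castSucc_lt]
        · rfl
        · simp [Fin.lt_def]
      simp [hN, Matrix.submatrix_apply, this]
    rw [Matrix.det_succ_column_zero, Finset.sum_eq_single 0]
    · have h1 : N 0 0 = M 1 0 := by rw [hN0]; rfl
      have h2 : N.submatrix (Fin.succAbove 0) Fin.succ
          = M.submatrix (Fin.succ ∘ Fin.succ) (Fin.succ ∘ Fin.succ) := by
        have hsa : ∀ b : Fin m, (1 : Fin (m + 2)).succAbove b.succ = b.succ.succ :=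
          fun b => Fin.succAbove_of_le_castSucc _ _ (by simp [Fin.le_def])
        ext a b
        simp [hN, Matrix.submatrix_apply, hsa]
      rw [h1, h2]
      norm_num
    · intro k _ hk
      rw [hN0, hcol _ (Fin.succ_ne_zero k) ?_]
      · ring
      · intro h
        apply hk
        have : k.succ = (0 : Fin (m + 1)).succ := by rw [h]; rfl
        exact Fin.succ_injective _ this
    · simp
  rw [Matrix.det_succ_row_zero, Fin.sum_univ_succ, Fin.sum_univ_succ]
  have h3 : ∀ j : Fin m, M 0 j.succ.succ = 0 := by
    intro j
    refine hrow _ (Fin.succ_ne_zero _) ?_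
    intro h
    have : j.succ.succ = (0 : Fin (m + 1)).succ := by rw [h]; rfl
    exact Fin.succ_ne_zero _ (Fin.succ_injective _ this)
  simp only [h3, mul_zero, zero_mul, Finset.sum_const_zero, add_zero]
  have e1 : ((0 : Fin (m + 1)).succ : Fin (m + 2)) = 1 := rfl
  rw [e1, hminor]
  simp [Fin.succAbove_zero]
  ring

lemma dd_insert {ι : Type*} [DecidableEq ι] [Fintype ι] (A : Matrix ι ι ℝ) (z i : ι)
    (hzi : z ≠ i) (s : Finset ι) (hi : i ∉ s)
    (hrow : ∀ j ∈ s, j ≠ z → A i j = 0) (hcol : ∀ j ∈ s, j ≠ z → A j i = 0) :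
    dd A (insert i s) = A i i * dd A s
      - (if z ∈ s then A i z * A z i * dd A (s.erase z) else 0) := by
  set I : {x // x ∈ insert i s} := ⟨i, Finset.mem_insert_self i s⟩ with hI
  by_cases hz : z ∈ s
  · -- hub present
    obtain ⟨m, hm⟩ : ∃ m, s.card = m + 1 :=
      ⟨s.card - 1, (Nat.succ_pred_eq_of_pos (Finset.card_pos.2 ⟨z, hz⟩)).symm⟩
    have hcard : Fintype.card {x // x ∈ insert i s} = m + 2 := by
      rw [Fintype.card_coe, Finset.card_insert_of_notMem hi, hm]
    set Z : {x // x ∈ insert i s} := ⟨z, Finset.mem_insert_of_mem hz⟩ with hZ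
    have hZI : Z ≠ I := fun h => hzi (congrArg Subtype.val h)
    obtain ⟨e, heI, heZ⟩ : ∃ e : {x // x ∈ insert i s} ≃ Fin (m + 2), e I = 0 ∧ e Z = 1 := by
      let e0 := Fintype.equivFinOfCardEq hcard
      let e1 : {x // x ∈ insert i s} ≃ Fin (m + 2) := e0.trans (Equiv.swap (e0 I) 0)
      have he1I : e1 I = 0 := by simp [e1, Equiv.swap_apply_left]
      have he1Z : e1 Z ≠ 0 := fun h => hZI (e1.injective (h.trans he1I.symm))
      refine ⟨e1.trans (Equiv.swap (e1 Z) 1), ?_, ?_⟩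
      · show Equiv.swap (e1 Z) 1 (e1 I) = 0
        rw [he1I, Equiv.swap_apply_of_ne_of_ne (Ne.symm he1Z) (by simp)]
      · show Equiv.swap (e1 Z) 1 (e1 Z) = 1
        exact Equiv.swap_apply_left _ _
    have hsymmI : e.symm 0 = I := by rw [← heI, Equiv.symm_apply_apply]
    have hsymmZ : e.symm 1 = Z := by rw [← heZ, Equiv.symm_apply_apply]
    set M := (A.submatrix (Subtype.val : {x // x ∈ insert i s} → ι) Subtype.val).submatrix
      e.symm e.symm with hMdef
    have hdd : dd A (insert i s) = M.det := (Matrix.det_submatrix_equiv_self e.symm _).symm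
    have hMapp : ∀ a b, M a b = A (e.symm a).1 (e.symm b).1 := fun a b => rfl
    have hne0 : ∀ k : Fin (m + 2), k ≠ 0 → (e.symm k).1 ≠ i := by
      intro k hk h
      refine hk ?_
      have h' : e.symm k = I := Subtype.ext h
      have := congrArg e h'
      rwa [Equiv.apply_symm_apply, heI] at this
    have hne1 : ∀ k : Fin (m + 2), k ≠ 1 → (e.symm k).1 ≠ z := by
      intro k hk h
      refine hk ?_
      have h' : e.symm k = Z := Subtype.ext h
      have := congrArg e h'
      rwa [Equiv.apply_symm_apply, heZ] at this
    have hmem : ∀ k : Fin (m + 2), k ≠ 0 → (e.symm k).1 ∈ s :=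
      fun k hk => Finset.mem_of_mem_insert_of_ne (e.symm k).2 (hne0 k hk)
    rw [hdd, det_fin_row01 M ?_ ?_]
    · have h00 : M 0 0 = A i i := by rw [hMapp, hsymmI]
      have h01 : M 0 1 = A i z := by rw [hMapp, hsymmI, hsymmZ]
      have h10 : M 1 0 = A z i := by rw [hMapp, hsymmI, hsymmZ]
      have hd1 : (M.submatrix Fin.succ Fin.succ).det = dd A s := by
        refine dd_of_inj A (fun k : Fin (m + 1) => (e.symm k.succ).1) ?_ s ?_ ?_
        · intro a b h
          exact Fin.succ_injective _ (e.symm.injective (Subtype.ext h))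
        · intro k
          exact hmem _ (Fin.succ_ne_zero k)
        · intro y hy
          have hyi : (⟨y, Finset.mem_insert_of_mem hy⟩ : {x // x ∈ insert i s}) ≠ I :=
            fun h => hi (by
              have hyx : y = i := congrArg Subtype.val h
              rwa [hyx] at hy)
          have : e ⟨y, Finset.mem_insert_of_mem hy⟩ ≠ 0 :=
            fun h => hyi (e.injective (h.trans heI.symm))
          obtain ⟨k, hk⟩ := Fin.exists_succ_eq.2 this
          refine ⟨k, ?_⟩
          show (e.symm k.succ).1 = y
          rw [hk, Equiv.symm_apply_apply]
      have hd2 : (M.submatrix (Fin.succ ∘ Fin.succ) (Fin.succ ∘ Fin.succ)).det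
          = dd A (s.erase z) := by
        refine dd_of_inj A (fun k : Fin m => (e.symm k.succ.succ).1) ?_ (s.erase z) ?_ ?_
        · intro a b h
          exact Fin.succ_injective _ (Fin.succ_injective _ (e.symm.injective (Subtype.ext h)))
        · intro k
          refine Finset.mem_erase.2 ⟨?_, hmem _ (Fin.succ_ne_zero _)⟩
          refine hne1 _ ?_
          intro h
          have : k.succ.succ = (0 : Fin (m + 1)).succ := by rw [h]; rfl
          exact Fin.succ_ne_zero _ (Fin.succ_injective _ this)
        · intro y hy
          obtain ⟨hyz, hys⟩ := Finset.mem_erase.1 hy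
          have hyi : (⟨y, Finset.mem_insert_of_mem hys⟩ : {x // x ∈ insert i s}) ≠ I :=
            fun h => hi (by
              have hyx : y = i := congrArg Subtype.val h
              rwa [hyx] at hys)
          have h0 : e ⟨y, Finset.mem_insert_of_mem hys⟩ ≠ 0 :=
            fun h => hyi (e.injective (h.trans heI.symm))
          have h1 : e ⟨y, Finset.mem_insert_of_mem hys⟩ ≠ 1 := by
            intro h
            exact hyz (congrArg Subtype.val (e.injective (h.trans heZ.symm)))
          obtain ⟨k1, hk1⟩ := Fin.exists_succ_eq.2 h0
          have hk1' : k1 ≠ 0 := by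
            intro h
            apply h1
            rw [← hk1, h]; rfl
          obtain ⟨k2, hk2⟩ := Fin.exists_succ_eq.2 hk1'
          refine ⟨k2, ?_⟩
          show (e.symm k2.succ.succ).1 = y
          rw [hk2, hk1, Equiv.symm_apply_apply]
      rw [h00, h01, h10, hd1, hd2, if_pos hz]
    · intro j hj0 hj1
      rw [hMapp, hsymmI]
      exact hrow _ (hmem j hj0) (hne1 j hj1)
    · intro j hj0 hj1
      rw [hMapp, hsymmI]
      exact hcol _ (hmem j hj0) (hne1 j hj1)
  · -- hub absent
    have hcard : Fintype.card {x // x ∈ insert i s} = s.card + 1 := by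
      rw [Fintype.card_coe, Finset.card_insert_of_notMem hi]
    obtain ⟨e, heI⟩ : ∃ e : {x // x ∈ insert i s} ≃ Fin (s.card + 1), e I = 0 := by
      let e0 := Fintype.equivFinOfCardEq hcard
      refine ⟨e0.trans (Equiv.swap (e0 I) 0), ?_⟩
      show Equiv.swap (e0 I) 0 (e0 I) = 0
      exact Equiv.swap_apply_left _ _
    have hsymmI : e.symm 0 = I := by rw [← heI, Equiv.symm_apply_apply]
    set M := (A.submatrix (Subtype.val : {x // x ∈ insert i s} → ι) Subtype.val).submatrix
      e.symm e.symm with hMdef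
    have hdd : dd A (insert i s) = M.det := (Matrix.det_submatrix_equiv_self e.symm _).symm
    have hMapp : ∀ a b, M a b = A (e.symm a).1 (e.symm b).1 := fun a b => rfl
    have hne0 : ∀ k : Fin (s.card + 1), k ≠ 0 → (e.symm k).1 ≠ i := by
      intro k hk h
      refine hk ?_
      have h' : e.symm k = I := Subtype.ext h
      have := congrArg e h'
      rwa [Equiv.apply_symm_apply, heI] at this
    have hmem : ∀ k : Fin (s.card + 1), k ≠ 0 → (e.symm k).1 ∈ s :=
      fun k hk => Finset.mem_of_mem_insert_of_ne (e.symm k).2 (hne0 k hk)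
    rw [hdd, det_fin_row0 M ?_]
    · have h00 : M 0 0 = A i i := by rw [hMapp, hsymmI]
      have hd1 : (M.submatrix Fin.succ Fin.succ).det = dd A s := by
        refine dd_of_inj A (fun k : Fin s.card => (e.symm k.succ).1) ?_ s ?_ ?_
        · intro a b h
          exact Fin.succ_injective _ (e.symm.injective (Subtype.ext h))
        · intro k
          exact hmem _ (Fin.succ_ne_zero k)
        · intro y hy
          have hyi : (⟨y, Finset.mem_insert_of_mem hy⟩ : {x // x ∈ insert i s}) ≠ I :=
            fun h => hi (by
              have hyx : y = i := congrArg Subtype.val h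
              rwa [hyx] at hy)
          have : e ⟨y, Finset.mem_insert_of_mem hy⟩ ≠ 0 :=
            fun h => hyi (e.injective (h.trans heI.symm))
          obtain ⟨k, hk⟩ := Fin.exists_succ_eq.2 this
          refine ⟨k, ?_⟩
          show (e.symm k.succ).1 = y
          rw [hk, Equiv.symm_apply_apply]
      rw [h00, hd1, if_neg hz, sub_zero]
    · intro j hj
      rw [hMapp, hsymmI]
      refine hrow _ (hmem j hj) ?_
      intro h
      exact hz (h ▸ hmem j hj)

/-- Let `A` be an `n×n` (`n = N+2 ≥ 2`) real symmetric arrowhead matrix. Then for every index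
`i ≠ 0` (i.e. `2 ≤ i` in 1-based notation) and every `l ≥ 0`,
`S_l(A) = S_l(A|i) + A_{ii} S_{l−1}(A|i) − A_{1i}² S_{l−2}(A|1i)`, where `A|i` (resp. `A|1i`)
is the principal submatrix of `A` obtained by deleting row and column `i` (resp. rows and
columns `1` and `i`). -/
theorem mS_arrowhead_delete (N : ℕ) (A : Matrix (Fin (N + 2)) (Fin (N + 2)) ℝ)
    (hsymm : A.IsSymm)
    (harrow : ∀ i j : Fin (N + 2), i ≠ 0 → j ≠ 0 → i ≠ j → A i j = 0)
    (i : Fin (N + 2)) (hi : i ≠ 0) (l : ℕ) :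
    mSZ (l : ℤ) A
      = mSZ (l : ℤ) (Matrix.of fun a b : {x : Fin (N + 2) // x ≠ i} => A a.1 b.1)
        + A i i * mSZ ((l : ℤ) - 1) (Matrix.of fun a b : {x : Fin (N + 2) // x ≠ i} => A a.1 b.1)
        - (A 0 i) ^ 2 *
            mSZ ((l : ℤ) - 2)
              (Matrix.of fun a b : {x : Fin (N + 2) // x ≠ 0 ∧ x ≠ i} => A a.1 b.1) := by
  classical
  set U : Finset (Fin (N + 2)) := Finset.univ.filter (fun x => x ≠ i) with hU
  set V : Finset (Fin (N + 2)) := Finset.univ.filter (fun x => x ≠ 0 ∧ x ≠ i) with hV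
  have hmemU : ∀ x, x ∈ U ↔ x ≠ i := by intro x; simp [hU]
  have hmemV : ∀ x, x ∈ V ↔ (x ≠ 0 ∧ x ≠ i) := by intro x; simp [hV]
  -- step A
  have stepA : ∀ l' : ℕ, mS (l' + 1) A
      = mS (l' + 1) (Matrix.of fun a b : {x : Fin (N + 2) // x ≠ i} => A a.1 b.1)
        + A i i * mS l' (Matrix.of fun a b : {x : Fin (N + 2) // x ≠ i} => A a.1 b.1)
        - A 0 i ^ 2 * ∑ s ∈ U.powersetCard l',
            (if (0 : Fin (N + 2)) ∈ s then dd A (s.erase 0) else 0) := by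
    intro l'
    have hfilt : ∀ n : ℕ,
        ((Finset.univ : Finset (Fin (N + 2))).powersetCard n).filter (fun t => i ∉ t)
          = U.powersetCard n := by
      intro n
      ext t
      simp only [Finset.mem_filter, Finset.mem_powersetCard, Finset.subset_univ, true_and]
      constructor
      · rintro ⟨hcard, hit⟩
        exact ⟨fun x hx => (hmemU x).2 (fun h => hit (h ▸ hx)), hcard⟩
      · rintro ⟨hsub, hcard⟩
        exact ⟨hcard, fun h => (hmemU i).1 (hsub h) rfl⟩
    rw [mS_eq_sum_dd, mS_restrict, mS_restrict,
      ← Finset.sum_filter_add_sum_filter_not (Finset.univ.powersetCard (l' + 1))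
        (fun t => i ∈ t)]
    have h2 : ((Finset.univ : Finset (Fin (N + 2))).powersetCard (l' + 1)).filter
        (fun t => ¬ i ∈ t) = U.powersetCard (l' + 1) := hfilt (l' + 1)
    rw [h2]
    have h3 : ∑ t ∈ ((Finset.univ : Finset (Fin (N + 2))).powersetCard (l' + 1)).filter
        (fun t => i ∈ t), dd A t
        = ∑ s ∈ U.powersetCard l', dd A (insert i s) := by
      refine Finset.sum_nbij' (fun t => t.erase i) (fun s => insert i s) ?_ ?_ ?_ ?_ ?_
      · intro t ht
        simp only [Finset.mem_filter, Finset.mem_powersetCard, Finset.subset_univ,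
          true_and] at ht
        simp only [Finset.mem_powersetCard]
        refine ⟨fun x hx => (hmemU x).2 (Finset.ne_of_mem_erase hx), ?_⟩
        rw [Finset.card_erase_of_mem ht.2, ht.1]
        omega
      · intro s hs
        simp only [Finset.mem_powersetCard] at hs
        have his : i ∉ s := fun h => (hmemU i).1 (hs.1 h) rfl
        simp only [Finset.mem_filter, Finset.mem_powersetCard, Finset.subset_univ, true_and]
        exact ⟨by rw [Finset.card_insert_of_notMem his, hs.2], Finset.mem_insert_self i s⟩
      · intro t ht
        simp only [Finset.mem_filter] at ht
        exact Finset.insert_erase ht.2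
      · intro s hs
        simp only [Finset.mem_powersetCard] at hs
        exact Finset.erase_insert (fun h => (hmemU i).1 (hs.1 h) rfl)
      · intro t ht
        simp only [Finset.mem_filter] at ht
        rw [Finset.insert_erase ht.2]
    rw [h3]
    have h4 : ∀ s ∈ U.powersetCard l', dd A (insert i s)
        = A i i * dd A s - (if (0 : Fin (N + 2)) ∈ s then A 0 i ^ 2 * dd A (s.erase 0) else 0) := by
      intro s hs
      simp only [Finset.mem_powersetCard] at hs
      have his : i ∉ s := fun h => (hmemU i).1 (hs.1 h) rfl
      rw [dd_insert A 0 i (Ne.symm hi) s his ?_ ?_]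
      · congr 1
        split_ifs with h
        · have : A i 0 = A 0 i := hsymm.apply 0 i
          rw [this]; ring
        · rfl
      · intro j hj hj0
        exact harrow i j hi hj0 (fun h => (hmemU j).1 (hs.1 hj) h.symm)
      · intro j hj hj0
        exact harrow j i hj0 hi (fun h => (hmemU j).1 (hs.1 hj) h)
    have h5 : ∑ s ∈ U.powersetCard l',
        (if (0 : Fin (N + 2)) ∈ s then A 0 i ^ 2 * dd A (s.erase 0) else 0)
        = A 0 i ^ 2 * ∑ s ∈ U.powersetCard l',
            (if (0 : Fin (N + 2)) ∈ s then dd A (s.erase 0) else 0) := by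
      rw [Finset.mul_sum]
      refine Finset.sum_congr rfl fun s _ => ?_
      split_ifs <;> simp
    rw [Finset.sum_congr rfl h4, Finset.sum_sub_distrib, ← Finset.mul_sum, h5]
    ring
  -- step B
  have stepB0 : ∑ s ∈ U.powersetCard 0,
      (if (0 : Fin (N + 2)) ∈ s then dd A (s.erase 0) else 0) = 0 := by
    refine Finset.sum_eq_zero fun s hs => ?_
    simp only [Finset.mem_powersetCard] at hs
    rw [Finset.card_eq_zero.1 hs.2]
    simp
  have stepB : ∀ l'' : ℕ, ∑ s ∈ U.powersetCard (l'' + 1),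
      (if (0 : Fin (N + 2)) ∈ s then dd A (s.erase 0) else 0)
      = mS l'' (Matrix.of fun a b : {x : Fin (N + 2) // x ≠ 0 ∧ x ≠ i} => A a.1 b.1) := by
    intro l''
    rw [mS_restrict, ← Finset.sum_filter]
    refine Finset.sum_nbij' (fun t => t.erase 0) (fun s => insert 0 s) ?_ ?_ ?_ ?_ ?_
    · intro t ht
      simp only [Finset.mem_filter, Finset.mem_powersetCard] at ht
      obtain ⟨⟨hsub, hcard⟩, h0t⟩ := ht
      simp only [Finset.mem_powersetCard]
      constructor
      · intro x hx
        refine (hmemV x).2 ⟨Finset.ne_of_mem_erase hx, ?_⟩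
        exact (hmemU x).1 (hsub (Finset.mem_of_mem_erase hx))
      · rw [Finset.card_erase_of_mem h0t, hcard]
        omega
    · intro s hs
      simp only [Finset.mem_powersetCard] at hs
      have h0s : (0 : Fin (N + 2)) ∉ s := fun h => ((hmemV 0).1 (hs.1 h)).1 rfl
      simp only [Finset.mem_filter, Finset.mem_powersetCard]
      refine ⟨⟨?_, by rw [Finset.card_insert_of_notMem h0s, hs.2]⟩, Finset.mem_insert_self 0 s⟩
      intro x hx
      rcases Finset.mem_insert.1 hx with rfl | hx'
      · exact (hmemU 0).2 (Ne.symm hi)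
      · exact (hmemU x).2 ((hmemV x).1 (hs.1 hx')).2
    · intro t ht
      simp only [Finset.mem_filter] at ht
      exact Finset.insert_erase ht.2
    · intro s hs
      simp only [Finset.mem_powersetCard] at hs
      exact Finset.erase_insert (fun h => ((hmemV 0).1 (hs.1 h)).1 rfl)
    · intro t _
      rfl
  -- assembling
  have mSZ_nat : ∀ {κ : Type} [inst1 : DecidableEq κ] [inst2 : Fintype κ] (n : ℕ)
      (B : Matrix κ κ ℝ), mSZ (n : ℤ) B = mS n B := by
    intro κ _ _ n B
    simp [mSZ]
  have mSZ_neg : ∀ {κ : Type} [inst1 : DecidableEq κ] [inst2 : Fintype κ] (n : ℤ)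
      (_ : n < 0) (B : Matrix κ κ ℝ), mSZ n B = 0 := by
    intro κ _ _ n hn B
    rw [mSZ, if_neg (by omega)]
  match l with
  | 0 =>
    norm_num [mSZ, mS_zero]
  | 1 =>
    have h := stepA 0
    rw [stepB0, mS_zero] at h
    norm_num at h
    norm_num [mSZ, h, mS_zero]
  | (l'' + 2) =>
    have h := stepA (l'' + 1)
    rw [stepB l''] at h
    have c0 : mSZ ((l'' + 2 : ℕ) : ℤ) A = mS (l'' + 2) A := mSZ_nat _ _
    have c1 : mSZ ((l'' + 2 : ℕ) : ℤ)
        (Matrix.of fun a b : {x : Fin (N + 2) // x ≠ i} => A a.1 b.1)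
        = mS (l'' + 2) (Matrix.of fun a b : {x : Fin (N + 2) // x ≠ i} => A a.1 b.1) :=
      mSZ_nat _ _
    have c2 : mSZ (((l'' + 2 : ℕ) : ℤ) - 1)
        (Matrix.of fun a b : {x : Fin (N + 2) // x ≠ i} => A a.1 b.1)
        = mS (l'' + 1) (Matrix.of fun a b : {x : Fin (N + 2) // x ≠ i} => A a.1 b.1) := by
      rw [show ((l'' + 2 : ℕ) : ℤ) - 1 = ((l'' + 1 : ℕ) : ℤ) by push_cast; ring]
      exact mSZ_nat _ _
    have c3 : mSZ (((l'' + 2 : ℕ) : ℤ) - 2)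
        (Matrix.of fun a b : {x : Fin (N + 2) // x ≠ 0 ∧ x ≠ i} => A a.1 b.1)
        = mS l'' (Matrix.of fun a b : {x : Fin (N + 2) // x ≠ 0 ∧ x ≠ i} => A a.1 b.1) := by
      rw [show ((l'' + 2 : ℕ) : ℤ) - 2 = ((l'' : ℕ) : ℤ) by push_cast; ring]
      exact mSZ_nat _ _
    rw [c0, c1, c2, c3]
    exact h
end

section
/- Let n ≥ 2, 0 ≤ k ≤ n−1, and let A be an n×n real symmetric arrowhead matrix with A_{11} < 0 and S_l(A) > 0 for l = 1,…,k+1. Then for every 2 ≤ i ≤ n, (∂Q_k/∂A_{ii})(A) > 0. -/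
open Finset Polynomial

/-- `mQ k B = S_{k+1}(B) / S_k(B)`. -/
noncomputable def mQ {ι : Type*} [DecidableEq ι] [Fintype ι] (k : ℕ) (B : Matrix ι ι ℝ) : ℝ :=
  mS (k + 1) B / mS k B

/-- `pdmQ k i j B` is the partial derivative `∂Q_k/∂B_{ij}` of the function
`B ↦ Q_k(B) = S_{k+1}(B)/S_k(B)` of the matrix entries, with respect to the `(i,j)` entry,
evaluated at `B`. -/
noncomputable def pdmQ {ι : Type*} [DecidableEq ι] [Fintype ι] (k : ℕ) (i j : ι)
    (B : Matrix ι ι ℝ) : ℝ :=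
  deriv (fun s : ℝ => mQ k (B + s • Matrix.single i j (1 : ℝ))) 0

namespace ArrowAux


lemma esymm_cons (a : ℝ) (m : Multiset ℝ) (l : ℕ) :
    (a ::ₘ m).esymm (l + 1) = m.esymm (l + 1) + a * m.esymm l := by
  simp only [Multiset.esymm, Multiset.powersetCard_cons, Multiset.map_add, Multiset.sum_add,
    Multiset.map_map, Function.comp_def, Multiset.prod_cons]
  rw [Multiset.sum_map_mul_left]

lemma esymm_of_card_lt {m : Multiset ℝ} {l : ℕ} (h : Multiset.card m < l) :
    m.esymm l = 0 := by
  simp [Multiset.esymm, Multiset.powersetCard_eq_empty _ h]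

lemma esymm_zero (m : Multiset ℝ) : m.esymm 0 = 1 := by
  simp [Multiset.esymm, Multiset.powersetCard_zero_left]

lemma esymm_one (m : Multiset ℝ) : m.esymm 1 = m.sum := by
  simp [Multiset.esymm, Multiset.powersetCard_one, Multiset.map_map, Function.comp_def]

lemma esymm_card (m : Multiset ℝ) : m.esymm (Multiset.card m) = m.prod := by
  induction m using Multiset.induction with
  | empty => simp [esymm_zero]
  | cons a m ih =>
      rw [Multiset.card_cons, esymm_cons, esymm_of_card_lt (by omega), ih, Multiset.prod_cons]
      ring

lemma sq_sum_le (m : Multiset ℝ) :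
    m.sum ^ 2 ≤ (Multiset.card m : ℝ) * (m.map (fun x => x ^ 2)).sum := by
  induction m using Multiset.induction with
  | empty => simp
  | cons a m ih =>
      have hQ : 0 ≤ (m.map (fun x => x ^ 2)).sum := by
        apply Multiset.sum_nonneg
        intro x hx
        obtain ⟨y, _, rfl⟩ := Multiset.mem_map.mp hx
        positivity
      have hM : (0:ℝ) ≤ (Multiset.card m : ℝ) := by positivity
      by_cases hm : m = 0
      · subst hm; simp
      · have hM1 : (1:ℝ) ≤ (Multiset.card m : ℝ) := by
          have : 1 ≤ Multiset.card m := by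
            rcases Multiset.exists_mem_of_ne_zero hm with ⟨x, hx⟩
            exact Multiset.card_pos.mpr (fun h => by simp [h] at hx)
          exact_mod_cast this
        simp only [Multiset.sum_cons, Multiset.card_cons, Multiset.map_cons]
        push_cast
        set M := (Multiset.card m : ℝ)
        set S := m.sum
        set Q := (m.map (fun x => x ^ 2)).sum
        have hMt : M * ((M+1)*(a^2+Q) - (a+S)^2)
            = (S - M*a)^2 + (M+1)*(M*Q - S^2) := by ring
        nlinarith [hMt, sq_nonneg (S - M*a), ih, hM1, mul_nonneg (by linarith : (0:ℝ) ≤ M+1) (by linarith [ih] : (0:ℝ) ≤ M*Q - S^2)]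

lemma two_esymm_two (m : Multiset ℝ) :
    2 * m.esymm 2 = m.sum ^ 2 - (m.map (fun x => x ^ 2)).sum := by
  induction m using Multiset.induction with
  | empty => simp [esymm_of_card_lt (m := 0) (l := 2) (by simp)]
  | cons a m ih =>
      have h1 : (a ::ₘ m).esymm 2 = m.esymm 2 + a * m.esymm 1 := esymm_cons a m 1
      rw [h1, esymm_one, Multiset.sum_cons, Multiset.map_cons, Multiset.sum_cons]
      ring_nf
      ring_nf at ih
      linarith [ih]

lemma prod_map_inv (m : Multiset ℝ) (h0 : (0:ℝ) ∉ m) :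
    (m.map (·⁻¹)).prod * m.prod = 1 := by
  induction m using Multiset.induction with
  | empty => simp
  | cons a m ih =>
      have ha : a ≠ 0 := fun h => h0 (h ▸ Multiset.mem_cons_self a m)
      have h0' : (0:ℝ) ∉ m := fun h => h0 (Multiset.mem_cons_of_mem h)
      simp only [Multiset.map_cons, Multiset.prod_cons]
      calc a⁻¹ * (Multiset.map (·⁻¹) m).prod * (a * m.prod)
          = (a⁻¹ * a) * ((Multiset.map (·⁻¹) m).prod * m.prod) := by ring
        _ = 1 := by rw [inv_mul_cancel₀ ha, ih h0', mul_one]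

lemma esymm_inv (m : Multiset ℝ) (h0 : (0:ℝ) ∉ m) :
    ∀ l, l ≤ Multiset.card m →
      (m.map (·⁻¹)).esymm l * m.prod = m.esymm (Multiset.card m - l) := by
  induction m using Multiset.induction with
  | empty =>
      intro l hl
      simp only [Multiset.card_zero, Nat.le_zero] at hl
      subst hl
      simp [esymm_zero]
  | cons a m ih =>
      intro l hl
      have ha : a ≠ 0 := fun h => h0 (h ▸ Multiset.mem_cons_self a m)
      have h0' : (0:ℝ) ∉ m := fun h => h0 (Multiset.mem_cons_of_mem h)
      match l with
      | 0 =>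
          simp only [esymm_zero, one_mul, Nat.sub_zero]
          rw [esymm_card]
      | (l' + 1) =>
          rw [Multiset.map_cons, esymm_cons, Multiset.prod_cons]
          rw [Multiset.card_cons] at hl ⊢
          by_cases hcase : l' + 1 ≤ Multiset.card m
          · have e1 := ih h0' (l' + 1) hcase
            have e2 := ih h0' l' (by omega)
            have hsub : Multiset.card m + 1 - (l' + 1) = (Multiset.card m - (l' + 1)) + 1 := by
              omega
            rw [hsub, esymm_cons]
            have hsub2 : Multiset.card m - l' = (Multiset.card m - (l' + 1)) + 1 := by omega
            rw [hsub2] at e2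
            calc ((m.map (·⁻¹)).esymm (l' + 1) + a⁻¹ * (m.map (·⁻¹)).esymm l') * (a * m.prod)
                = a * ((m.map (·⁻¹)).esymm (l' + 1) * m.prod)
                  + (a⁻¹ * a) * ((m.map (·⁻¹)).esymm l' * m.prod) := by ring
              _ = a * m.esymm (Multiset.card m - (l' + 1))
                  + m.esymm ((Multiset.card m - (l' + 1)) + 1) := by
                  rw [e1, e2, inv_mul_cancel₀ ha, one_mul]
              _ = _ := by ring
          · have hl' : l' = Multiset.card m := by omega
            subst hl'
            rw [esymm_of_card_lt (by rw [Multiset.card_map]; omega)]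
            have hsub : Multiset.card m + 1 - (Multiset.card m + 1) = 0 := by omega
            rw [hsub, esymm_zero]
            have hc : (m.map (·⁻¹)).esymm (Multiset.card m) = (m.map (·⁻¹)).prod := by
              rw [← Multiset.card_map (·⁻¹) m, esymm_card]
            rw [hc]
            calc (0 + a⁻¹ * (m.map (·⁻¹)).prod) * (a * m.prod)
                = (a⁻¹ * a) * ((m.map (·⁻¹)).prod * m.prod) := by ring
              _ = 1 := by rw [inv_mul_cancel₀ ha, one_mul, prod_map_inv m h0']


lemma newton_base (K : ℕ) (m : Multiset ℝ) (hm : Multiset.card m = K + 2) :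
    m.esymm K * m.esymm (K + 2) * (((K : ℝ) + 2) * 2)
      ≤ m.esymm (K + 1) ^ 2 * (((K : ℝ) + 1) * 1) := by
  by_cases h0 : (0:ℝ) ∈ m
  · have hprod : m.esymm (K + 2) = 0 := by
      rw [← hm, esymm_card]; exact Multiset.prod_eq_zero h0
    rw [hprod]
    have : (0:ℝ) ≤ m.esymm (K + 1) ^ 2 * (((K : ℝ) + 1) * 1) := by positivity
    linarith
  · set y := m.map (·⁻¹) with hy
    have h2 : y.esymm 2 * m.prod = m.esymm K := by
      have := esymm_inv m h0 2 (by omega)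
      rwa [hm, show K + 2 - 2 = K by omega] at this
    have h1 : y.esymm 1 * m.prod = m.esymm (K + 1) := by
      have := esymm_inv m h0 1 (by omega)
      rwa [hm, show K + 2 - 1 = K + 1 by omega] at this
    have hP : m.prod = m.esymm (K + 2) := by rw [← hm, esymm_card]
    have hcy : (Multiset.card y : ℝ) = (K : ℝ) + 2 := by
      rw [Multiset.card_map, hm]; push_cast; ring
    have hCS := sq_sum_le y
    rw [hcy] at hCS
    have htwo := two_esymm_two y
    rw [esymm_one] at h1
    have hQS : 0 ≤ ((K:ℝ) + 2) * (y.map (fun x => x ^ 2)).sum - y.sum ^ 2 := by linarith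
    rw [← h2, ← h1, ← hP]
    have step1 : y.esymm 2 * m.prod * m.prod * (((K:ℝ) + 2) * 2)
        = (((K:ℝ) + 2) * (y.sum ^ 2 - (y.map (fun x => x ^ 2)).sum)) * m.prod ^ 2 := by
      linear_combination (((K:ℝ) + 2) * m.prod ^ 2) * htwo
    have step2 : (((K:ℝ) + 2) * (y.sum ^ 2 - (y.map (fun x => x ^ 2)).sum)) * m.prod ^ 2
        ≤ (((K:ℝ) + 1) * y.sum ^ 2) * m.prod ^ 2 := by
      apply mul_le_mul_of_nonneg_right _ (sq_nonneg m.prod)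
      linarith
    calc y.esymm 2 * m.prod * m.prod * (((K:ℝ) + 2) * 2)
        = (((K:ℝ) + 2) * (y.sum ^ 2 - (y.map (fun x => x ^ 2)).sum)) * m.prod ^ 2 := step1
      _ ≤ (((K:ℝ) + 1) * y.sum ^ 2) * m.prod ^ 2 := step2
      _ = (y.sum * m.prod) ^ 2 * (((K:ℝ) + 1) * 1) := by ring

lemma deriv_esymm (m : Multiset ℝ) (hM : 1 ≤ Multiset.card m) :
    ∃ m' : Multiset ℝ, Multiset.card m' = Multiset.card m - 1 ∧
      ∀ l, l ≤ Multiset.card m - 1 →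
        (Multiset.card m : ℝ) * m'.esymm l
          = ((Multiset.card m - l : ℕ) : ℝ) * m.esymm l := by
  classical
  set M := Multiset.card m with hMdef
  set p : ℝ[X] := (m.map (fun a => X + C a)).prod with hp
  have hmonic : p.Monic :=
    monic_multiset_prod_of_monic _ _ (fun a _ => monic_X_add_C a)
  have hmap : m.map (fun a => X + C a) = (m.map Neg.neg).map (fun a => X - C a) := by
    rw [Multiset.map_map]
    apply Multiset.map_congr rfl
    intro x _
    simp [sub_neg_eq_add]
  have hproots : p.roots = m.map Neg.neg := by
    rw [hp, hmap, roots_multiset_prod_X_sub_C]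
  have hdegle : p.natDegree ≤ M := by
    refine (natDegree_multiset_prod_le _).trans ?_
    rw [Multiset.map_map]
    have : ∀ x ∈ m, (natDegree ∘ fun a => X + C a) x = 1 := by
      intro x _; simp [natDegree_X_add_C]
    rw [Multiset.map_congr rfl this]
    simp [Multiset.map_const', hMdef]
  have hpdeg : p.natDegree = M := by
    have h1 : M ≤ p.natDegree := by
      have := card_roots' p
      rwa [hproots, Multiset.card_map] at this
    omega
  set q := derivative p with hq
  have hqdeg_lt : q.natDegree < M := by
    rw [← hpdeg]
    exact natDegree_derivative_lt (by omega)
  have hqroots_ge : M - 1 ≤ Multiset.card q.roots := by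
    have h := card_roots_le_derivative p
    rw [hproots, Multiset.card_map, ← hq] at h
    omega
  have hqcard : Multiset.card q.roots = q.natDegree := by
    have := card_roots' q
    omega
  have hqdeg : q.natDegree = M - 1 := by
    have := card_roots' q
    omega
  have hlc : q.leadingCoeff = (M : ℝ) := by
    rw [leadingCoeff, hqdeg, hq, coeff_derivative, show M - 1 + 1 = M by omega,
      ← hpdeg, hmonic.coeff_natDegree, hpdeg, Nat.cast_sub hM]
    push_cast
    ring
  have hqfact := C_leadingCoeff_mul_prod_multiset_X_sub_C hqcard
  refine ⟨q.roots.map Neg.neg, by rw [Multiset.card_map, hqcard, hqdeg], ?_⟩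
  intro l hl
  have hcoefq : q.coeff (M - 1 - l) = ((M - l : ℕ) : ℝ) * m.esymm l := by
    rw [hq, coeff_derivative, show M - 1 - l + 1 = M - l by omega]
    have : p.coeff (M - l) = m.esymm l := by
      have h := Multiset.prod_X_add_C_coeff m (show M - l ≤ Multiset.card m by omega)
      rw [← hp] at h
      rw [h, ← hMdef, show M - (M - l) = l by omega]
    rw [this, show M - 1 - l = M - (l + 1) by omega,
      Nat.cast_sub (show l + 1 ≤ M by omega), Nat.cast_sub (show l ≤ M by omega)]
    push_cast
    ring
  have hmap2 : (q.roots.map fun a => X - C a) = ((q.roots.map Neg.neg).map fun a => X + C a) := by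
    rw [Multiset.map_map]
    apply Multiset.map_congr rfl
    intro x _
    simp [sub_eq_add_neg]
  have hcoefq2 : q.coeff (M - 1 - l) = (M : ℝ) * (q.roots.map Neg.neg).esymm l := by
    conv_lhs => rw [← hqfact]
    rw [coeff_C_mul, hlc, hmap2]
    congr 1
    have h := Multiset.prod_X_add_C_coeff (q.roots.map Neg.neg)
      (show M - 1 - l ≤ Multiset.card (q.roots.map Neg.neg) by
        rw [Multiset.card_map, hqcard, hqdeg]; omega)
    rw [h, Multiset.card_map, hqcard, hqdeg, show M - 1 - (M - 1 - l) = l by omega]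
  rw [← hcoefq2, hcoefq]

theorem newton (j : ℕ) : ∀ (K : ℕ) (m : Multiset ℝ), Multiset.card m = K + 2 + j →
    m.esymm K * m.esymm (K + 2) * (((K : ℝ) + 2) * ((j : ℝ) + 2))
      ≤ m.esymm (K + 1) ^ 2 * (((K : ℝ) + 1) * ((j : ℝ) + 1)) := by
  induction j with
  | zero =>
      intro K m hm
      have := newton_base K m (by omega)
      push_cast
      push_cast at this
      linarith
  | succ j ih =>
      intro K m hm
      obtain ⟨m', hc, he⟩ := deriv_esymm m (by omega)
      have hM : Multiset.card m = K + 3 + j := by omega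
      have hc' : Multiset.card m' = K + 2 + j := by omega
      have hK := he K (by omega)
      have hK1 := he (K + 1) (by omega)
      have hK2 := he (K + 2) (by omega)
      rw [hM, show K + 3 + j - K = j + 3 by omega] at hK
      rw [hM, show K + 3 + j - (K + 1) = j + 2 by omega] at hK1
      rw [hM, show K + 3 + j - (K + 2) = j + 1 by omega] at hK2
      have hIH := ih K m' hc'
      -- multiply IH by (M:ℝ)^2
      have hMpos : (0:ℝ) < ((K + 3 + j : ℕ) : ℝ) := by positivity
      have hstep : ((j:ℝ) + 3) * m.esymm K * (((j:ℝ) + 1) * m.esymm (K + 2))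
            * (((K : ℝ) + 2) * ((j : ℝ) + 2))
          ≤ (((j:ℝ) + 2) * m.esymm (K + 1)) ^ 2 * (((K : ℝ) + 1) * ((j : ℝ) + 1)) := by
        have h1 : ((K + 3 + j : ℕ) : ℝ) ^ 2 * (m'.esymm K * m'.esymm (K + 2)
              * (((K : ℝ) + 2) * ((j : ℝ) + 2)))
            ≤ ((K + 3 + j : ℕ) : ℝ) ^ 2 * (m'.esymm (K + 1) ^ 2
              * (((K : ℝ) + 1) * ((j : ℝ) + 1))) := by
          apply mul_le_mul_of_nonneg_left hIH (by positivity)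
        calc ((j:ℝ) + 3) * m.esymm K * (((j:ℝ) + 1) * m.esymm (K + 2))
              * (((K : ℝ) + 2) * ((j : ℝ) + 2))
            = (((j + 3 : ℕ) : ℝ) * m.esymm K) * (((j + 1 : ℕ) : ℝ) * m.esymm (K + 2))
              * (((K : ℝ) + 2) * ((j : ℝ) + 2)) := by push_cast; ring
          _ = ((K + 3 + j : ℕ) : ℝ) ^ 2 * (m'.esymm K * m'.esymm (K + 2)
              * (((K : ℝ) + 2) * ((j : ℝ) + 2))) := by
              rw [← hK, ← hK2]; ring
          _ ≤ ((K + 3 + j : ℕ) : ℝ) ^ 2 * (m'.esymm (K + 1) ^ 2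
              * (((K : ℝ) + 1) * ((j : ℝ) + 1))) := h1
          _ = (((j + 2 : ℕ) : ℝ) * m.esymm (K + 1)) ^ 2
              * (((K : ℝ) + 1) * ((j : ℝ) + 1)) := by
              rw [← hK1]; ring
          _ = (((j:ℝ) + 2) * m.esymm (K + 1)) ^ 2 * (((K : ℝ) + 1) * ((j : ℝ) + 1)) := by
              push_cast; ring
      -- now cancel the factor (j+1)(j+2)
      have hposfac : (0:ℝ) < ((j:ℝ) + 1) * ((j:ℝ) + 2) := by positivity
      apply le_of_mul_le_mul_right _ hposfac
      push_cast
      nlinarith [hstep]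


variable {ι : Type*} [DecidableEq ι] [Fintype ι]

lemma det_pattern (B : Matrix ι ι ℝ) (u : Finset ι) :
    (Matrix.of fun r c : ι => if r ∈ u then B r c else if c = r then (1:ℝ) else 0).det
      = (Matrix.of fun i j : {x : ι // x ∈ u} => B i.1 j.1).det := by
  classical
  let e : {x : ι // x ∈ u} ⊕ {x : ι // ¬ x ∈ u} ≃ ι := Equiv.sumCompl (· ∈ u)
  rw [← Matrix.det_submatrix_equiv_self e]
  have hblock : (Matrix.of fun r c : ι =>
        if r ∈ u then B r c else if c = r then (1:ℝ) else 0).submatrix e e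
      = Matrix.fromBlocks (Matrix.of fun i j : {x : ι // x ∈ u} => B i.1 j.1)
          (Matrix.of fun (i : {x : ι // x ∈ u}) (j : {x : ι // ¬ x ∈ u}) => B i.1 j.1)
          0 1 := by
    ext i j
    cases i with
    | inl i =>
        cases j with
        | inl j => simp [e, Matrix.submatrix, i.2]
        | inr j => simp [e, Matrix.submatrix, i.2]
    | inr i =>
        cases j with
        | inl j =>
            have : j.1 ≠ i.1 := fun h => i.2 (h ▸ j.2)
            simp [e, Matrix.submatrix, i.2, this]
        | inr j =>
            by_cases h : i = j
            · subst h; simp [e, Matrix.submatrix, i.2, Matrix.one_apply]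
            · have h2 : j.1 ≠ i.1 := fun hh => h (Subtype.ext hh.symm)
              simp [e, Matrix.submatrix, i.2, h2, Matrix.one_apply, Ne.symm h2, h]
              exact fun hh => h hh.symm
  rw [hblock, Matrix.det_fromBlocks_zero₂₁, Matrix.det_one, mul_one]

lemma det_expand (x : ℝ) (s : Finset ι) (B : Matrix ι ι ℝ) :
    (Matrix.of fun r c : ι =>
        if r ∈ s then x * (if c = r then (1:ℝ) else 0) + B r c else B r c).det
      = ∑ t ∈ s.powerset, x ^ t.card *
          (Matrix.of fun r c : ι => if r ∈ t then (if c = r then (1:ℝ) else 0) else B r c).det := by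
  classical
  induction s using Finset.induction_on generalizing B with
  | empty =>
      simp only [Finset.notMem_empty, if_false, Finset.powerset_empty, Finset.sum_singleton,
        Finset.card_empty, pow_zero, one_mul]
  | @insert a s ha ih =>
      have lhs_eq : (Matrix.of fun r c : ι =>
          if r ∈ insert a s then x * (if c = r then (1:ℝ) else 0) + B r c else B r c)
        = (Matrix.of fun r c : ι =>
            if r ∈ s then x * (if c = r then (1:ℝ) else 0) + B r c else B r c).updateRow a
          (fun c => x * (if c = a then (1:ℝ) else 0) + B a c) := by
        ext r c
        by_cases hr : r = a
        · subst hr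
          simp [Matrix.updateRow_apply, ha]
        · simp [Matrix.updateRow_apply, hr, Finset.mem_insert]
      rw [lhs_eq]
      have hrow : (fun c => x * (if c = a then (1:ℝ) else 0) + B a c)
          = (x • (Pi.single a 1 : ι → ℝ)) + B a := by
        funext c
        simp [Pi.single_apply]
      rw [hrow, Matrix.det_updateRow_add, Matrix.det_updateRow_smul]
      have hsecond : ((Matrix.of fun r c : ι =>
          if r ∈ s then x * (if c = r then (1:ℝ) else 0) + B r c else B r c).updateRow a
            (B a))
          = (Matrix.of fun r c : ι =>
            if r ∈ s then x * (if c = r then (1:ℝ) else 0) + B r c else B r c) := by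
        have hBa : B a = (fun c => (Matrix.of fun r c : ι =>
            if r ∈ s then x * (if c = r then (1:ℝ) else 0) + B r c else B r c) a c) := by
          funext c
          simp [ha]
        conv_lhs => rw [hBa]
        exact Matrix.updateRow_eq_self _ a
      set B' := B.updateRow a (Pi.single a (1:ℝ)) with hB'
      have hfirst : ((Matrix.of fun r c : ι =>
          if r ∈ s then x * (if c = r then (1:ℝ) else 0) + B r c else B r c).updateRow a
            (Pi.single a (1:ℝ)))
          = (Matrix.of fun r c : ι =>
            if r ∈ s then x * (if c = r then (1:ℝ) else 0) + B' r c else B' r c) := by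
        ext r c
        by_cases hr : r = a
        · subst hr
          simp [Matrix.updateRow_apply, ha, hB']
        · simp [Matrix.updateRow_apply, hr, hB']
      rw [hsecond, hfirst, ih B, ih B']
      rw [Finset.sum_powerset_insert ha]
      conv_lhs => rw [add_comm]
      have hmatch : ∀ t ∈ s.powerset,
          (Matrix.of fun r c : ι =>
            if r ∈ t then (if c = r then (1:ℝ) else 0) else B' r c)
          = (Matrix.of fun r c : ι =>
            if r ∈ insert a t then (if c = r then (1:ℝ) else 0) else B r c) := by
        intro t ht
        have hat : a ∉ t := fun h => ha (Finset.mem_powerset.mp ht h)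
        ext r c
        by_cases hr : r = a
        · subst hr
          simp [hat, hB', Matrix.updateRow_apply, Pi.single_apply]
        · simp [hB', Matrix.updateRow_apply, hr, Finset.mem_insert]
      congr 1
      rw [Finset.mul_sum]
      apply Finset.sum_congr rfl
      intro t ht
      have hat : a ∉ t := fun h => ha (Finset.mem_powerset.mp ht h)
      rw [hmatch t ht, Finset.card_insert_of_notMem hat, pow_succ]
      ring

lemma det_smul_one_add (x : ℝ) (B : Matrix ι ι ℝ) :
    (x • (1 : Matrix ι ι ℝ) + B).det
      = ∑ l ∈ Finset.range (Fintype.card ι + 1), x ^ (Fintype.card ι - l) * mS l B := by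
  classical
  have h1 : x • (1 : Matrix ι ι ℝ) + B
      = (Matrix.of fun r c : ι =>
          if r ∈ (Finset.univ : Finset ι) then x * (if c = r then (1:ℝ) else 0) + B r c
          else B r c) := by
    ext r c
    by_cases h : r = c
    · subst h; simp [Matrix.one_apply]
    · simp [Matrix.one_apply, h]
      exact fun hh => absurd hh.symm h
  rw [h1, det_expand]
  have h2 : ∀ t ∈ (Finset.univ : Finset ι).powerset,
      x ^ t.card * (Matrix.of fun r c : ι =>
          if r ∈ t then (if c = r then (1:ℝ) else 0) else B r c).det
      = x ^ t.card * (Matrix.of fun i j : {x_1 : ι // x_1 ∈ tᶜ} => B i.1 j.1).det := by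
    intro t ht
    congr 1
    rw [← det_pattern B tᶜ]
    congr 1
    ext r c
    by_cases h : r ∈ t <;> simp [h]
  rw [Finset.sum_congr rfl h2]
  -- reindex t ↦ tᶜ
  have h3 : ∑ t ∈ (Finset.univ : Finset ι).powerset,
        x ^ t.card * (Matrix.of fun i j : {x_1 : ι // x_1 ∈ tᶜ} => B i.1 j.1).det
      = ∑ u ∈ (Finset.univ : Finset ι).powerset,
        x ^ (Fintype.card ι - u.card) * (Matrix.of fun i j : {x_1 : ι // x_1 ∈ u} => B i.1 j.1).det := by
    apply Finset.sum_nbij' (fun t => tᶜ) (fun u => uᶜ)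
    · intro t _; simp
    · intro u _; simp
    · intro t _; simp
    · intro u _; simp
    · intro t _
      have hle : #t ≤ Fintype.card ι := by simpa using Finset.card_le_univ t
      rw [Finset.card_compl, Nat.sub_sub_self hle]
  rw [h3, Finset.sum_powerset]
  have hcard : (Finset.univ : Finset ι).card = Fintype.card ι := Finset.card_univ
  rw [hcard]
  apply Finset.sum_congr rfl
  intro l hl
  have h4 : ∀ t ∈ Finset.powersetCard l (Finset.univ : Finset ι),
      x ^ (Fintype.card ι - #t) * (Matrix.of fun i j : {x_1 : ι // x_1 ∈ t} => B i.1 j.1).det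
      = x ^ (Fintype.card ι - l) * (Matrix.of fun i j : {x_1 : ι // x_1 ∈ t} => B i.1 j.1).det := by
    intro t ht
    rw [(Finset.mem_powersetCard.mp ht).2]
  rw [Finset.sum_congr rfl h4, ← Finset.mul_sum]
  rfl



variable {ι : Type*} [DecidableEq ι] [Fintype ι]

lemma det_add_smul_std (M : Matrix ι ι ℝ) (i : ι) (x : ℝ) :
    (M + x • Matrix.single i i 1).det = M.det + x * M.adjugate i i := by
  classical
  have h1 : M + x • Matrix.single i i 1
      = M.updateRow i (M i + x • (Pi.single i 1 : ι → ℝ)) := by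
    ext r c
    by_cases hr : r = i
    · subst hr
      simp [Matrix.updateRow_apply, Matrix.single, Pi.single_apply, eq_comm]
    · simp [Matrix.updateRow_apply, hr, Matrix.single,
        fun h : i = r => hr h.symm]
      exact fun h _ => absurd h.symm hr
  rw [h1, Matrix.det_updateRow_add, Matrix.det_updateRow_smul, Matrix.updateRow_eq_self,
    Matrix.adjugate_apply]

section spectral

variable {n : ℕ} (A : Matrix (Fin n) (Fin n) ℝ) (hA : A.IsHermitian)

lemma spectral_conj (x : ℝ) :
    x • (1 : Matrix (Fin n) (Fin n) ℝ) + A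
      = (hA.eigenvectorUnitary : Matrix (Fin n) (Fin n) ℝ)
        * Matrix.diagonal (fun j => x + hA.eigenvalues j)
        * star (hA.eigenvectorUnitary : Matrix (Fin n) (Fin n) ℝ) := by
  set U := (hA.eigenvectorUnitary : Matrix (Fin n) (Fin n) ℝ) with hU
  have hUU : U * star U = 1 := Matrix.mem_unitaryGroup_iff.mp hA.eigenvectorUnitary.2
  have hone : x • (1 : Matrix (Fin n) (Fin n) ℝ) = U * (x • 1) * star U := by
    rw [Matrix.mul_smul, Matrix.smul_mul, mul_one, hUU]
  have hspec : A = U * Matrix.diagonal hA.eigenvalues * star U := by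
    have := hA.spectral_theorem
    rwa [RCLike.ofReal_real_eq_id, Function.id_comp] at this
  have hdg : Matrix.diagonal (fun j => x + hA.eigenvalues j)
      = x • (1 : Matrix (Fin n) (Fin n) ℝ) + Matrix.diagonal hA.eigenvalues := by
    ext a b
    by_cases h : a = b
    · subst h; simp [Matrix.diagonal_apply, Matrix.one_apply]
    · simp [Matrix.diagonal_apply, h, Matrix.one_apply]
  rw [hdg, Matrix.mul_add, Matrix.add_mul, ← hspec, ← hone]

lemma spectral_det (x : ℝ) :
    (x • (1 : Matrix (Fin n) (Fin n) ℝ) + A).det = ∏ j, (x + hA.eigenvalues j) := by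
  rw [spectral_conj A hA x]
  set U := (hA.eigenvectorUnitary : Matrix (Fin n) (Fin n) ℝ)
  have hUU' : star U * U = 1 := Matrix.mem_unitaryGroup_iff'.mp hA.eigenvectorUnitary.2
  have hdet1 : (star U).det * U.det = 1 := by
    rw [← Matrix.det_mul, hUU', Matrix.det_one]
  rw [Matrix.det_mul, Matrix.det_mul, Matrix.det_diagonal]
  linear_combination (∏ j, (x + hA.eigenvalues j)) * hdet1

lemma spectral_adjugate (x : ℝ) (i : Fin n) :
    (x • (1 : Matrix (Fin n) (Fin n) ℝ) + A).adjugate i i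
      = ∑ j, ((hA.eigenvectorUnitary : Matrix (Fin n) (Fin n) ℝ) i j) ^ 2
          * ∏ m ∈ Finset.univ.erase j, (x + hA.eigenvalues m) := by
  rw [spectral_conj A hA x]
  set U := (hA.eigenvectorUnitary : Matrix (Fin n) (Fin n) ℝ) with hUdef
  have hUU : U * star U = 1 := Matrix.mem_unitaryGroup_iff.mp hA.eigenvectorUnitary.2
  have hUU' : star U * U = 1 := Matrix.mem_unitaryGroup_iff'.mp hA.eigenvectorUnitary.2
  set D := Matrix.diagonal (fun j => x + hA.eigenvalues j) with hD
  have hadjU : U.adjugate = U.det • star U := by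
    calc U.adjugate = U.adjugate * (U * star U) := by rw [hUU, mul_one]
      _ = (U.adjugate * U) * star U := by rw [mul_assoc]
      _ = U.det • star U := by rw [Matrix.adjugate_mul, Matrix.smul_mul, one_mul]
  have hadjsU : (star U).adjugate = (star U).det • U := by
    calc (star U).adjugate = (star U).adjugate * (star U * U) := by rw [hUU', mul_one]
      _ = ((star U).adjugate * star U) * U := by rw [mul_assoc]
      _ = (star U).det • U := by rw [Matrix.adjugate_mul, Matrix.smul_mul, one_mul]
  have hdet1 : (star U).det * U.det = 1 := by
    rw [← Matrix.det_mul, hUU', Matrix.det_one]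
  have hadj : (U * D * star U).adjugate = U * D.adjugate * star U := by
    rw [Matrix.adjugate_mul_distrib, Matrix.adjugate_mul_distrib, hadjU, hadjsU]
    simp only [Matrix.smul_mul, Matrix.mul_smul, smul_smul]
    rw [mul_comm (U.det), hdet1, one_smul, mul_assoc]
  rw [hadj, hD, Matrix.adjugate_diagonal]
  rw [Matrix.mul_apply]
  apply Finset.sum_congr rfl
  intro j _
  rw [Matrix.mul_diagonal, Matrix.star_apply, star_trivial]
  ring

lemma spectral_sum_sq (i : Fin n) :
    ∑ j, ((hA.eigenvectorUnitary : Matrix (Fin n) (Fin n) ℝ) i j) ^ 2 = 1 := by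
  set U := (hA.eigenvectorUnitary : Matrix (Fin n) (Fin n) ℝ)
  have hUU : U * star U = 1 := Matrix.mem_unitaryGroup_iff.mp hA.eigenvectorUnitary.2
  have h := congrFun (congrFun hUU i) i
  rw [Matrix.mul_apply] at h
  have h2 : ∀ j, U i j * (star U) j i = (U i j) ^ 2 := by
    intro j
    rw [Matrix.star_apply, star_trivial]
    ring
  rw [Finset.sum_congr rfl (fun j _ => h2 j)] at h
  rw [h]
  simp [Matrix.one_apply]

end spectral


lemma mS_zero {ι : Type*} [DecidableEq ι] [Fintype ι] (B : Matrix ι ι ℝ) : mS 0 B = 1 := by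
  haveI : IsEmpty {x : ι // x ∈ (∅ : Finset ι)} := ⟨fun x => (Finset.notMem_empty x.1 x.2)⟩
  rw [mS, Finset.powersetCard_zero, Finset.sum_singleton, Matrix.det_isEmpty]

lemma coeff_P_esymm {n : ℕ} (μ : Fin n → ℝ) (l : ℕ) (hl : l ≤ n) :
    (∏ j, (X + C (μ j))).coeff (n - l) = (Finset.univ.val.map μ).esymm l := by
  have huniv : #(Finset.univ : Finset (Fin n)) = n := by simp
  rw [Finset.prod_X_add_C_coeff Finset.univ μ (by rw [huniv]; omega),
    ← Finset.esymm_map_val, huniv, show n - (n - l) = l by omega]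

lemma coeff_R_zero {n : ℕ} (μ : Fin n → ℝ) (w : Fin n → ℝ) :
    (∑ j, C (w j) * ∏ m ∈ Finset.univ.erase j, (X + C (μ m))).coeff n = 0 := by
  rw [Polynomial.finset_sum_coeff]
  apply Finset.sum_eq_zero
  intro j _
  rw [Polynomial.coeff_C_mul]
  have hdeg : (∏ m ∈ Finset.univ.erase j, (X + C (μ m))).natDegree < n := by
    have h1 := Polynomial.natDegree_prod_le (Finset.univ.erase j) (fun m => X + C (μ m))
    have h2 : ∑ m ∈ Finset.univ.erase j, (X + C (μ m)).natDegree = n - 1 := by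
      rw [Finset.sum_congr rfl (fun m _ => Polynomial.natDegree_X_add_C (μ m)),
        Finset.sum_const, Finset.card_erase_of_mem (Finset.mem_univ j)]
      simp
    have hn : 1 ≤ n := by
      have := j.2
      omega
    omega
  rw [Polynomial.coeff_eq_zero_of_natDegree_lt hdeg, mul_zero]

lemma coeff_R_q {n : ℕ} (μ : Fin n → ℝ) (w : Fin n → ℝ) (l : ℕ) (h1 : 1 ≤ l) (hl : l ≤ n) :
    (∑ j, C (w j) * ∏ m ∈ Finset.univ.erase j, (X + C (μ m))).coeff (n - l)
      = ∑ j, w j * ((Finset.univ.erase j).val.map μ).esymm (l - 1) := by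
  rw [Polynomial.finset_sum_coeff]
  apply Finset.sum_congr rfl
  intro j _
  rw [Polynomial.coeff_C_mul]
  congr 1
  have hce : #(Finset.univ.erase j) = n - 1 := by
    rw [Finset.card_erase_of_mem (Finset.mem_univ j)]
    simp
  rw [Finset.prod_X_add_C_coeff _ μ (by rw [hce]; omega),
    ← Finset.esymm_map_val, hce, show n - 1 - (n - l) = l - 1 by omega]

lemma univ_val_cons {n : ℕ} (μ : Fin n → ℝ) (j : Fin n) :
    Finset.univ.val.map μ = μ j ::ₘ ((Finset.univ.erase j).val.map μ) := by
  rw [Finset.erase_val, ← Multiset.map_cons]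
  congr 1
  exact (Multiset.cons_erase (by simp : j ∈ Finset.univ.val)).symm



lemma key (x : ℝ) (m : Multiset ℝ) (K : ℕ)
    (h1 : 0 < (x ::ₘ m).esymm (K + 1)) (h2 : 0 < (x ::ₘ m).esymm (K + 2)) :
    m.esymm K * m.esymm (K + 2) < m.esymm (K + 1) ^ 2 := by
  rw [esymm_cons] at h1
  rw [show K + 2 = (K + 1) + 1 from rfl, esymm_cons] at h2
  by_contra hcon
  push_neg at hcon
  by_cases hcard : K + 2 ≤ Multiset.card m
  · have hcm : Multiset.card m = K + 2 + (Multiset.card m - (K + 2)) := by omega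
    have hN := newton (Multiset.card m - (K + 2)) K m hcm
    set j : ℕ := Multiset.card m - (K + 2) with hj
    have hge0 : 0 ≤ m.esymm K * m.esymm (K + 2) := le_trans (sq_nonneg _) hcon
    have hchain : m.esymm K * m.esymm (K + 2) * (((K:ℝ) + 2) * ((j:ℝ) + 2))
        ≤ m.esymm K * m.esymm (K + 2) * (((K:ℝ) + 1) * ((j:ℝ) + 1)) := by
      refine le_trans hN ?_
      apply mul_le_mul_of_nonneg_right hcon
      positivity
    have hc1 : ((K:ℝ) + 1) * ((j:ℝ) + 1) < ((K:ℝ) + 2) * ((j:ℝ) + 2) := by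
      have hK0 : (0:ℝ) ≤ (K:ℝ) := Nat.cast_nonneg K
      have hj0 : (0:ℝ) ≤ (j:ℝ) := Nat.cast_nonneg j
      nlinarith
    have hz : m.esymm K * m.esymm (K + 2) = 0 := by nlinarith
    have he1 : m.esymm (K + 1) = 0 := by
      have h0 : m.esymm (K + 1) ^ 2 = 0 := le_antisymm (hz ▸ hcon) (sq_nonneg _)
      exact pow_eq_zero_iff two_ne_zero |>.mp h0
    rw [he1, zero_add] at h1
    have hK0 : m.esymm K ≠ 0 := by
      intro h
      rw [h, mul_zero] at h1
      exact lt_irrefl 0 h1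
    have hK2 : m.esymm (K + 2) = 0 := by
      rcases mul_eq_zero.mp hz with h | h
      · exact absurd h hK0
      · exact h
    rw [hK2, he1, mul_zero, add_zero] at h2
    exact lt_irrefl 0 h2
  · have hK2 : m.esymm (K + 2) = 0 := esymm_of_card_lt (by omega)
    rw [hK2, mul_zero] at hcon
    have he1 : m.esymm (K + 1) = 0 := by
      have h0 : m.esymm (K + 1) ^ 2 = 0 := le_antisymm hcon (sq_nonneg _)
      exact pow_eq_zero_iff two_ne_zero |>.mp h0
    rw [hK2, he1, mul_zero, add_zero] at h2
    exact lt_irrefl 0 h2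

lemma coeff_sum_single (n : ℕ) (a : ℕ → ℝ) (l : ℕ) (hl : l ≤ n) :
    (∑ l' ∈ Finset.range (n + 1), C (a l') * X ^ (n - l')).coeff (n - l) = a l := by
  rw [Polynomial.finset_sum_coeff]
  rw [Finset.sum_eq_single l]
  · rw [Polynomial.coeff_C_mul, Polynomial.coeff_X_pow, if_pos rfl, mul_one]
  · intro b hb hne
    rw [Polynomial.coeff_C_mul, Polynomial.coeff_X_pow, if_neg, mul_zero]
    intro h
    have hb' := Finset.mem_range.mp hb
    omega
  · intro h
    exact absurd (Finset.mem_range.mpr (by omega)) h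

lemma main_poly_identity {n : ℕ} (A : Matrix (Fin n) (Fin n) ℝ) (hA : A.IsHermitian)
    (i : Fin n) (s : ℝ) :
    (∑ l ∈ Finset.range (n + 1),
        C (mS l (A + s • Matrix.single i i (1:ℝ))) * X ^ (n - l))
      = (∏ j, (X + C (hA.eigenvalues j)))
        + C s * ∑ j, C (((hA.eigenvectorUnitary : Matrix (Fin n) (Fin n) ℝ) i j) ^ 2)
            * ∏ m ∈ Finset.univ.erase j, (X + C (hA.eigenvalues m)) := by
  apply Polynomial.funext
  intro t
  have e1 : Polynomial.eval t (∑ l ∈ Finset.range (n + 1),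
        C (mS l (A + s • Matrix.single i i (1:ℝ))) * X ^ (n - l))
      = ∑ l ∈ Finset.range (n + 1),
          t ^ (n - l) * mS l (A + s • Matrix.single i i (1:ℝ)) := by
    rw [Polynomial.eval_finset_sum]
    apply Finset.sum_congr rfl
    intro l _
    rw [Polynomial.eval_mul, Polynomial.eval_C, Polynomial.eval_pow, Polynomial.eval_X]
    ring
  have e2 := det_smul_one_add t (A + s • Matrix.single i i (1:ℝ))
  rw [Fintype.card_fin] at e2
  have e3 : t • (1 : Matrix (Fin n) (Fin n) ℝ) + (A + s • Matrix.single i i (1:ℝ))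
      = (t • 1 + A) + s • Matrix.single i i (1:ℝ) := by
    rw [← add_assoc]
  have e4 := det_add_smul_std (t • (1:Matrix (Fin n) (Fin n) ℝ) + A) i s
  rw [e1, ← e2, e3, e4, spectral_det A hA t, spectral_adjugate A hA t i]
  rw [Polynomial.eval_add, Polynomial.eval_mul, Polynomial.eval_C, Polynomial.eval_prod,
    Polynomial.eval_finset_sum]
  simp only [Polynomial.eval_mul, Polynomial.eval_add, Polynomial.eval_C, Polynomial.eval_X,
    Polynomial.eval_prod]


lemma mS_affine {n : ℕ} (A : Matrix (Fin n) (Fin n) ℝ) (hA : A.IsHermitian) (i : Fin n)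
    (l : ℕ) (hl : l ≤ n) (s : ℝ) :
    mS l (A + s • Matrix.single i i (1:ℝ))
      = (∏ j, (X + C (hA.eigenvalues j))).coeff (n - l)
        + s * (∑ j, C (((hA.eigenvectorUnitary : Matrix (Fin n) (Fin n) ℝ) i j) ^ 2)
            * ∏ m ∈ Finset.univ.erase j, (X + C (hA.eigenvalues m))).coeff (n - l) := by
  have hid := main_poly_identity A hA i s
  have hc := congrArg (fun p => Polynomial.coeff p (n - l)) hid
  simp only at hc
  rw [coeff_sum_single n _ l hl] at hc
  rw [hc, Polynomial.coeff_add, Polynomial.coeff_C_mul]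

end ArrowAux

/-- Let `A` be an `n×n` (`n = N+2 ≥ 2`) real symmetric arrowhead matrix with `0 ≤ k ≤ n−1`,
`A_{11} < 0` and `S_l(A) > 0` for `l = 1,…,k+1`. Then `(∂Q_k/∂A_{ii})(A) > 0` for every
index `i ≠ 0` (i.e. `2 ≤ i` in 1-based notation). -/
theorem pdmQ_diag_pos (N k : ℕ) (hk : k + 1 ≤ N + 2)
    (A : Matrix (Fin (N + 2)) (Fin (N + 2)) ℝ)
    (hsymm : A.IsSymm)
    (harrow : ∀ i j : Fin (N + 2), i ≠ 0 → j ≠ 0 → i ≠ j → A i j = 0)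
    (h11 : A 0 0 < 0)
    (hpos : ∀ l : ℕ, 1 ≤ l → l ≤ k + 1 → 0 < mS l A) :
    ∀ i : Fin (N + 2), i ≠ 0 → 0 < pdmQ k i i A := by
  classical
  intro i _
  have hA : A.IsHermitian := by
    rw [Matrix.IsHermitian, Matrix.conjTranspose_eq_transpose_of_trivial]
    exact hsymm
  set μ : Fin (N + 2) → ℝ := hA.eigenvalues with hμ
  set wf : Fin (N + 2) → ℝ :=
    fun j => ((hA.eigenvectorUnitary : Matrix (Fin (N + 2)) (Fin (N + 2)) ℝ) i j) ^ 2 with hwf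
  -- the four coefficients
  set σ : ℕ → ℝ := fun l => (∏ j, (X + C (μ j))).coeff (N + 2 - l) with hσ
  set ρ : ℕ → ℝ := fun l =>
    (∑ j, C (wf j) * ∏ m ∈ Finset.univ.erase j, (X + C (μ m))).coeff (N + 2 - l) with hρ
  have hcoeff : ∀ (s : ℝ) (l : ℕ), l ≤ N + 2 →
      mS l (A + s • Matrix.single i i (1:ℝ)) = σ l + s * ρ l := by
    intro s l hl
    exact ArrowAux.mS_affine A hA i l hl s
  have hσA : ∀ l : ℕ, l ≤ N + 2 → σ l = mS l A := by
    intro l hl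
    have h := hcoeff 0 l hl
    rw [zero_mul, add_zero] at h
    have h2 : A + (0:ℝ) • Matrix.single i i (1:ℝ) = A := by
      rw [zero_smul, add_zero]
    rw [h2] at h
    exact h.symm
  have hσk_pos : 0 < σ k := by
    rcases Nat.eq_zero_or_pos k with hk0 | hk1
    · rw [hk0, hσA 0 (by omega), ArrowAux.mS_zero A]
      norm_num
    · rw [hσA k (by omega)]
      exact hpos k hk1 (by omega)
  have hσk1_pos : 0 < σ (k + 1) := by
    rw [hσA (k + 1) (by omega)]
    exact hpos (k + 1) (by omega) (by omega)
  -- derivative computation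
  have hEq : (fun s : ℝ => mQ k (A + s • Matrix.single i i (1:ℝ)))
      = fun s : ℝ => (σ (k + 1) + s * ρ (k + 1)) / (σ k + s * ρ k) := by
    funext s
    rw [mQ, hcoeff s (k + 1) hk, hcoeff s k (by omega)]
  have hnum : HasDerivAt (fun s : ℝ => σ (k + 1) + s * ρ (k + 1)) (ρ (k + 1)) 0 := by
    simpa using ((hasDerivAt_id (0:ℝ)).mul_const (ρ (k + 1))).const_add (σ (k + 1))
  have hden : HasDerivAt (fun s : ℝ => σ k + s * ρ k) (ρ k) 0 := by
    simpa using ((hasDerivAt_id (0:ℝ)).mul_const (ρ k)).const_add (σ k)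
  have hden0 : σ k + 0 * ρ k ≠ 0 := by
    rw [zero_mul, add_zero]
    exact ne_of_gt hσk_pos
  have hder := hnum.div hden hden0
  have hpd : pdmQ k i i A = (ρ (k + 1) * σ k - σ (k + 1) * ρ k) / σ k ^ 2 := by
    rw [pdmQ, hEq, (show HasDerivAt (fun s : ℝ => (σ (k + 1) + s * ρ (k + 1)) / (σ k + s * ρ k)) _ 0 from hder).deriv]
    rw [zero_mul, add_zero, zero_mul, add_zero]
  rw [hpd]
  apply div_pos _ (pow_pos hσk_pos 2)
  -- numerator positivity
  have hwnn : ∀ j, 0 ≤ wf j := by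
    intro j
    rw [hwf]
    positivity
  have hwsum : ∑ j, wf j = 1 := by
    rw [hwf]
    exact ArrowAux.spectral_sum_sq A hA i
  obtain ⟨j₀, _, hj₀⟩ : ∃ j ∈ Finset.univ, wf j ≠ 0 := by
    apply Finset.exists_ne_zero_of_sum_ne_zero
    rw [hwsum]
    norm_num
  have hwj₀ : 0 < wf j₀ := lt_of_le_of_ne (hwnn j₀) (Ne.symm hj₀)
  rcases k with _ | K
  · -- k = 0
    have hρ0 : ρ 0 = 0 := by
      rw [hρ]
      simp only [Nat.sub_zero]
      exact ArrowAux.coeff_R_zero μ wf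
    have hρ1 : ρ 1 = 1 := by
      rw [hρ]
      simp only
      rw [ArrowAux.coeff_R_q μ wf 1 le_rfl (by omega)]
      simp only [Nat.sub_self, ArrowAux.esymm_zero, mul_one]
      exact hwsum
    rw [hρ0, hρ1, mul_zero, sub_zero, one_mul]
    exact hσk_pos
  · -- k = K + 1
    have hρk : ρ (K + 1) = ∑ j, wf j * ((Finset.univ.erase j).val.map μ).esymm K := by
      rw [hρ]
      simp only
      rw [ArrowAux.coeff_R_q μ wf (K + 1) (by omega) (by omega)]
      simp
    have hρk1 : ρ (K + 2) = ∑ j, wf j * ((Finset.univ.erase j).val.map μ).esymm (K + 1) := by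
      rw [hρ]
      simp only
      rw [ArrowAux.coeff_R_q μ wf (K + 2) (by omega) (by omega)]
      simp
    have hσesymm : ∀ l : ℕ, l ≤ N + 2 → σ l = (Finset.univ.val.map μ).esymm l := by
      intro l hl
      rw [hσ]
      simp only
      exact ArrowAux.coeff_P_esymm μ l hl
    have hGj : ∀ j : Fin (N + 2),
        0 < ((Finset.univ.erase j).val.map μ).esymm (K + 1) * σ (K + 1)
            - σ (K + 2) * ((Finset.univ.erase j).val.map μ).esymm K := by
      intro j
      set mj := ((Finset.univ.erase j).val.map μ) with hmj
      have hcons : Finset.univ.val.map μ = μ j ::ₘ mj := ArrowAux.univ_val_cons μ j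
      have hσ1 : σ (K + 1) = mj.esymm (K + 1) + μ j * mj.esymm K := by
        rw [hσesymm (K + 1) (by omega), hcons, ArrowAux.esymm_cons]
      have hσ2 : σ (K + 2) = mj.esymm (K + 2) + μ j * mj.esymm (K + 1) := by
        rw [hσesymm (K + 2) (by omega), hcons, show K + 2 = (K + 1) + 1 from rfl,
          ArrowAux.esymm_cons]
      have hkey := ArrowAux.key (μ j) mj K
        (by rw [← hcons, ← hσesymm (K + 1) (by omega)]; exact hσk_pos)
        (by rw [show K + 2 = (K + 1) + 1 from rfl, ← hcons,
              ← hσesymm (K + 2) (by omega)]; exact hσk1_pos)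
      rw [hσ1, hσ2]
      nlinarith [hkey]
    rw [hρk, hρk1, Finset.sum_mul, Finset.mul_sum, ← Finset.sum_sub_distrib]
    have hterm : ∀ j ∈ Finset.univ,
        wf j * ((Finset.univ.erase j).val.map μ).esymm (K + 1) * σ (K + 1)
          - σ (K + 2) * (wf j * ((Finset.univ.erase j).val.map μ).esymm K)
        = wf j * (((Finset.univ.erase j).val.map μ).esymm (K + 1) * σ (K + 1)
            - σ (K + 2) * ((Finset.univ.erase j).val.map μ).esymm K) := by
      intro j _
      ring
    rw [Finset.sum_congr rfl hterm]
    apply Finset.sum_pos'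
    · intro j _
      exact mul_nonneg (hwnn j) (le_of_lt (hGj j))
    · exact ⟨j₀, Finset.mem_univ j₀, mul_pos hwj₀ (hGj j₀)⟩
end

section
/- Let n ≥ 2, 1 ≤ k ≤ n−1, and let A be an n×n real symmetric arrowhead matrix with S_k(A) ≠ 0. Then ∑_{i=1}^n (∂Q_k/∂A_{ii})(A) = (n−k) − (n−k+1)·S_{k+1}(A)S_{k−1}(A)/S_k(A)². In particular, if moreover S_l(A) > 0 for l = 1,…,k+1, then ∑_{i=1}^n (∂Q_k/∂A_{ii})(A) ≤ n−k. -/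
open Finset

section aux
universe u
variable {ι : Type*} [DecidableEq ι] [Fintype ι]

/-- det of the principal submatrix of `B` indexed by `t`. -/
noncomputable def mDet (B : Matrix ι ι ℝ) (t : Finset ι) : ℝ :=
  Matrix.det (Matrix.of fun i j : {x : ι // x ∈ t} => B i.1 j.1)

lemma mS_eq (l : ℕ) (B : Matrix ι ι ℝ) :
    mS l B = ∑ t ∈ Finset.univ.powersetCard l, mDet B t := rfl

lemma mS_zero_s13 (B : Matrix ι ι ℝ) : mS 0 B = 1 := by
  rw [mS_eq, Finset.powersetCard_zero, Finset.sum_singleton, mDet]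
  exact Matrix.det_isEmpty

/-- An equiv between `Option (t.erase i)` and `t`. -/
def optErase (t : Finset ι) (i : ι) (hi : i ∈ t) :
    Option {x : ι // x ∈ t.erase i} ≃ {x : ι // x ∈ t} where
  toFun o := o.elim ⟨i, hi⟩ (fun z => ⟨z.1, Finset.mem_of_mem_erase z.2⟩)
  invFun y := if h : y.1 = i then none else some ⟨y.1, Finset.mem_erase.2 ⟨h, y.2⟩⟩
  left_inv o := by
    rcases o with _ | z
    · simp
    · have hz : z.1 ≠ i := (Finset.mem_erase.1 z.2).1
      simp [hz]
  right_inv y := by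
    by_cases h : y.1 = i
    · simp only [h, dif_pos, Option.elim]
      exact Subtype.ext h.symm
    · simp [h]

lemma det_option_row {m : Type u} [DecidableEq m] [Fintype m]
    (M : Matrix (Option m) (Option m) ℝ)
    (h1 : M none none = 1) (h0 : ∀ j : m, M none (some j) = 0) :
    M.det = Matrix.det (Matrix.of fun a b : m => M (some a) (some b)) := by
  rw [← Matrix.det_submatrix_equiv_self (Equiv.optionEquivSumPUnit.{u, u} m).symm M]
  have h : (M.submatrix (Equiv.optionEquivSumPUnit.{u, u} m).symm
        (Equiv.optionEquivSumPUnit.{u, u} m).symm)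
      = Matrix.fromBlocks (Matrix.of fun a b : m => M (some a) (some b))
          (Matrix.of fun (a : m) (_ : PUnit.{u + 1}) => M (some a) none) 0 1 := by
    ext a b
    rcases a with a | a <;> rcases b with b | b <;>
      simp [h1, h0, Matrix.one_apply]
  rw [h, Matrix.det_fromBlocks_zero₂₁, Matrix.det_one, mul_one]

lemma det_updateRow_pi_single (B : Matrix ι ι ℝ) (t : Finset ι) (i : ι) (hi : i ∈ t) :
    Matrix.det ((Matrix.of fun a b : {x : ι // x ∈ t} => B a.1 b.1).updateRow
      ⟨i, hi⟩ (Pi.single ⟨i, hi⟩ 1)) = mDet B (t.erase i) := by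
  set M := (Matrix.of fun a b : {x : ι // x ∈ t} => B a.1 b.1).updateRow
      ⟨i, hi⟩ (Pi.single ⟨i, hi⟩ 1) with hM
  rw [← Matrix.det_submatrix_equiv_self (optErase t i hi) M, det_option_row]
  · congr 1
    ext a b
    have ha : (⟨a.1, Finset.mem_of_mem_erase a.2⟩ : {x : ι // x ∈ t}) ≠ ⟨i, hi⟩ := by
      intro hcon
      exact (Finset.mem_erase.1 a.2).1 (congrArg Subtype.val hcon)
    simp only [Matrix.submatrix_apply, optErase, Equiv.coe_fn_mk, Option.elim, hM,
      Matrix.of_apply]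
    rw [Matrix.updateRow_ne ha]
    rfl
  · simp only [Matrix.submatrix_apply, optErase, Equiv.coe_fn_mk, Option.elim, hM]
    rw [Matrix.updateRow_self, Pi.single_eq_same]
  · intro j
    have hj : (⟨j.1, Finset.mem_of_mem_erase j.2⟩ : {x : ι // x ∈ t}) ≠ ⟨i, hi⟩ := by
      intro hcon
      exact (Finset.mem_erase.1 j.2).1 (congrArg Subtype.val hcon)
    simp only [Matrix.submatrix_apply, optErase, Equiv.coe_fn_mk, Option.elim, hM]
    rw [Matrix.updateRow_self, Pi.single_eq_of_ne hj]

lemma mDet_add_smul_single (B : Matrix ι ι ℝ) (i : ι) (s : ℝ) (t : Finset ι) (hi : i ∈ t) :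
    mDet (B + s • Matrix.single i i (1 : ℝ)) t
      = mDet B t + s * mDet B (t.erase i) := by
  set M0 : Matrix {x : ι // x ∈ t} {x : ι // x ∈ t} ℝ :=
    Matrix.of fun a b : {x : ι // x ∈ t} => B a.1 b.1 with hM0
  set i' : {x : ι // x ∈ t} := (⟨i, hi⟩ : {x : ι // x ∈ t}) with hi'
  have key : (Matrix.of fun a b : {x : ι // x ∈ t} =>
        (B + s • Matrix.single i i (1 : ℝ)) a.1 b.1)
      = M0.updateRow i' (M0 i' + s • (Pi.single i' 1 : {x : ι // x ∈ t} → ℝ)) := by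
    ext a b
    by_cases ha : a = i'
    · subst ha
      rw [Matrix.updateRow_self]
      by_cases hb : b = i'
      · subst hb
        simp [hM0, Matrix.single, hi']
      · have hb' : b.1 ≠ i := fun hcon => hb (Subtype.ext hcon)
        simp [hM0, Matrix.single, Pi.single_eq_of_ne hb, Ne.symm hb']
    · rw [Matrix.updateRow_ne ha]
      have ha' : a.1 ≠ i := fun hcon => ha (Subtype.ext hcon)
      simp [hM0, Matrix.single, Ne.symm ha']
  have hrowfix : M0.updateRow i' (M0 i') = M0 := Matrix.updateRow_eq_self _ _
  rw [mDet, key, Matrix.det_updateRow_add, Matrix.det_updateRow_smul, hrowfix,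
    det_updateRow_pi_single]
  rfl

lemma mDet_add_smul_single_not_mem (B : Matrix ι ι ℝ) (i : ι) (s : ℝ) (t : Finset ι)
    (hi : i ∉ t) :
    mDet (B + s • Matrix.single i i (1 : ℝ)) t = mDet B t := by
  unfold mDet
  congr 1
  ext a b
  have ha : a.1 ≠ i := fun h => hi (h ▸ a.2)
  simp [Matrix.single, Ne.symm ha]

/-- slope of `s ↦ mS l (B + s E_ii)`. -/
noncomputable def mC (l : ℕ) (i : ι) (B : Matrix ι ι ℝ) : ℝ :=
  ∑ t ∈ (Finset.univ.powersetCard l).filter (fun t => i ∈ t), mDet B (t.erase i)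

lemma mS_add_smul (l : ℕ) (B : Matrix ι ι ℝ) (i : ι) (s : ℝ) :
    mS l (B + s • Matrix.single i i (1 : ℝ)) = mS l B + s * mC l i B := by
  rw [mS_eq, mS_eq, mC,
    ← Finset.sum_filter_add_sum_filter_not (Finset.univ.powersetCard l) (fun t => i ∈ t),
    ← Finset.sum_filter_add_sum_filter_not (Finset.univ.powersetCard l) (fun t => i ∈ t)
      (mDet B)]
  have h1 : ∑ t ∈ (Finset.univ.powersetCard l).filter (fun t => i ∈ t),
      mDet (B + s • Matrix.single i i (1 : ℝ)) t
      = ∑ t ∈ (Finset.univ.powersetCard l).filter (fun t => i ∈ t),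
        (mDet B t + s * mDet B (t.erase i)) := by
    refine Finset.sum_congr rfl fun t ht => ?_
    exact mDet_add_smul_single B i s t (Finset.mem_filter.1 ht).2
  have h2 : ∑ t ∈ (Finset.univ.powersetCard l).filter (fun t => ¬ i ∈ t),
      mDet (B + s • Matrix.single i i (1 : ℝ)) t
      = ∑ t ∈ (Finset.univ.powersetCard l).filter (fun t => ¬ i ∈ t), mDet B t := by
    refine Finset.sum_congr rfl fun t ht => ?_
    exact mDet_add_smul_single_not_mem B i s t (Finset.mem_filter.1 ht).2
  rw [h1, h2, Finset.sum_add_distrib, ← Finset.mul_sum]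
  ring

lemma mC_eq (l : ℕ) (hl : 1 ≤ l) (i : ι) (B : Matrix ι ι ℝ) :
    mC l i B = ∑ u ∈ (Finset.univ.powersetCard (l - 1)).filter (fun u => i ∉ u), mDet B u := by
  rw [mC]
  refine Finset.sum_nbij' (fun t => t.erase i) (fun u => insert i u) ?_ ?_ ?_ ?_ ?_
  · intro t ht
    obtain ⟨ht1, ht2⟩ := Finset.mem_filter.1 ht
    refine Finset.mem_filter.2 ⟨?_, Finset.notMem_erase i t⟩
    rw [Finset.mem_powersetCard]
    exact ⟨Finset.subset_univ _,
      by rw [Finset.card_erase_of_mem ht2, (Finset.mem_powersetCard.1 ht1).2]⟩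
  · intro u hu
    obtain ⟨hu1, hu2⟩ := Finset.mem_filter.1 hu
    refine Finset.mem_filter.2 ⟨?_, Finset.mem_insert_self i u⟩
    rw [Finset.mem_powersetCard]
    refine ⟨Finset.subset_univ _, ?_⟩
    rw [Finset.card_insert_of_notMem hu2, (Finset.mem_powersetCard.1 hu1).2]
    omega
  · intro t ht
    exact Finset.insert_erase (Finset.mem_filter.1 ht).2
  · intro u hu
    exact Finset.erase_insert (Finset.mem_filter.1 hu).2
  · intro t ht
    rfl

lemma sum_mC (l : ℕ) (hl : 1 ≤ l) (B : Matrix ι ι ℝ) :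
    ∑ i : ι, mC l i B = ((Fintype.card ι : ℝ) - ((l - 1 : ℕ) : ℝ)) * mS (l - 1) B := by
  have key : ∀ i : ι, mC l i B
      = ∑ u ∈ Finset.univ.powersetCard (l - 1), if i ∉ u then mDet B u else 0 := by
    intro i
    rw [mC_eq l hl i B, Finset.sum_filter]
  simp only [key]
  rw [Finset.sum_comm, mS_eq, Finset.mul_sum]
  refine Finset.sum_congr rfl fun u hu => ?_
  have hcard : u.card = l - 1 := (Finset.mem_powersetCard.1 hu).2
  have hle : u.card ≤ Fintype.card ι := Finset.card_le_univ u
  have : ∑ i : ι, (if i ∉ u then mDet B u else 0)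
      = ((Finset.univ.filter (fun i => i ∉ u)).card : ℝ) * mDet B u := by
    rw [← Finset.sum_filter, Finset.sum_const, nsmul_eq_mul]
  rw [this]
  have hfil : Finset.univ.filter (fun i => i ∉ u) = uᶜ := by
    ext x; simp [Finset.mem_compl]
  rw [hfil, Finset.card_compl, Nat.cast_sub (hcard ▸ hle), hcard]

lemma pdmQ_diag (B : Matrix ι ι ℝ) (i : ι) (k : ℕ) (h : mS k B ≠ 0) :
    pdmQ k i i B
      = (mC (k + 1) i B * mS k B - mS (k + 1) B * mC k i B) / (mS k B) ^ 2 := by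
  have hfun : (fun s : ℝ => mQ k (B + s • Matrix.single i i (1 : ℝ)))
      = fun s => (mS (k + 1) B + s * mC (k + 1) i B) / (mS k B + s * mC k i B) := by
    funext s
    rw [mQ, mS_add_smul, mS_add_smul]
  have h1 : HasDerivAt (fun s : ℝ => mS (k + 1) B + s * mC (k + 1) i B) (mC (k + 1) i B) 0 := by
    have := ((hasDerivAt_id (0 : ℝ)).mul_const (mC (k + 1) i B)).const_add (mS (k + 1) B)
    rwa [one_mul] at this
  have h2 : HasDerivAt (fun s : ℝ => mS k B + s * mC k i B) (mC k i B) 0 := by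
    have := ((hasDerivAt_id (0 : ℝ)).mul_const (mC k i B)).const_add (mS k B)
    rwa [one_mul] at this
  have hne : mS k B + 0 * mC k i B ≠ 0 := by simpa using h
  have hdiv := h1.div h2 hne
  rw [pdmQ, hfun, HasDerivAt.deriv (f := fun s : ℝ => (mS (k + 1) B + s * mC (k + 1) i B) / (mS k B + s * mC k i B)) hdiv]
  simp

end aux

/-- Let `A` be an `n×n` (`n = N+2 ≥ 2`) real symmetric arrowhead matrix with `1 ≤ k ≤ n−1` and
`S_k(A) ≠ 0`. Then `∑_{i=1}^n (∂Q_k/∂A_{ii})(A) = (n−k) − (n−k+1)·S_{k+1}(A)S_{k−1}(A)/S_k(A)²`;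
in particular, if moreover `S_l(A) > 0` for `l = 1,…,k+1`, then
`∑_{i=1}^n (∂Q_k/∂A_{ii})(A) ≤ n−k`. -/
theorem sum_pdmQ_diag (N k : ℕ) (hk1 : 1 ≤ k) (hk2 : k + 1 ≤ N + 2)
    (A : Matrix (Fin (N + 2)) (Fin (N + 2)) ℝ)
    (hsymm : A.IsSymm)
    (harrow : ∀ i j : Fin (N + 2), i ≠ 0 → j ≠ 0 → i ≠ j → A i j = 0)
    (hS : mS k A ≠ 0) :
    (∑ i, pdmQ k i i A
        = (((N : ℝ) + 2) - k)
          - ((((N : ℝ) + 2) - k) + 1) * (mS (k + 1) A * mS (k - 1) A) / (mS k A) ^ 2)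
    ∧ ((∀ l : ℕ, 1 ≤ l → l ≤ k + 1 → 0 < mS l A) →
        ∑ i, pdmQ k i i A ≤ ((N : ℝ) + 2) - k) := by
  have hcard : (Fintype.card (Fin (N + 2)) : ℝ) = (N : ℝ) + 2 := by
    simp
  have hsum1 : ∑ i : Fin (N + 2), mC (k + 1) i A = (((N : ℝ) + 2) - (k : ℝ)) * mS k A := by
    have := sum_mC (k + 1) (by omega) A
    simpa [hcard] using this
  have hsum2 : ∑ i : Fin (N + 2), mC k i A
      = (((N : ℝ) + 2) - (k : ℝ) + 1) * mS (k - 1) A := by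
    have := sum_mC k hk1 A
    rw [hcard] at this
    have hc : ((k - 1 : ℕ) : ℝ) = (k : ℝ) - 1 := by
      have : (1 : ℕ) ≤ k := hk1
      push_cast [this]
      ring
    rw [hc] at this
    convert this using 2
    ring
  have heq : ∑ i, pdmQ k i i A
      = (((N : ℝ) + 2) - k)
        - ((((N : ℝ) + 2) - k) + 1) * (mS (k + 1) A * mS (k - 1) A) / (mS k A) ^ 2 := by
    have : ∑ i, pdmQ k i i A
        = ((∑ i : Fin (N + 2), mC (k + 1) i A) * mS k A
            - mS (k + 1) A * (∑ i : Fin (N + 2), mC k i A)) / (mS k A) ^ 2 := by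
      rw [Finset.sum_congr rfl (fun i _ => pdmQ_diag A i k hS)]
      rw [← Finset.sum_div, Finset.sum_sub_distrib, ← Finset.sum_mul, ← Finset.mul_sum]
    rw [this, hsum1, hsum2]
    field_simp
  refine ⟨heq, fun hpos => ?_⟩
  rw [heq]
  have hS1 : 0 < mS (k + 1) A := hpos (k + 1) (by omega) le_rfl
  have hS2 : 0 ≤ mS (k - 1) A := by
    rcases Nat.eq_or_lt_of_le hk1 with h | h
    · rw [← h]
      simp [mS_zero_s13]
    · exact le_of_lt (hpos (k - 1) (by omega) (by omega))
  have hk' : (k : ℝ) ≤ (N : ℝ) + 1 := by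
    have : k ≤ N + 1 := by omega
    exact_mod_cast this
  have hnonneg : 0 ≤ ((((N : ℝ) + 2) - k) + 1) * (mS (k + 1) A * mS (k - 1) A) / (mS k A) ^ 2 := by
    apply div_nonneg
    · apply mul_nonneg
      · linarith
      · exact mul_nonneg hS1.le hS2
    · positivity
  linarith
end
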